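/- arXiv:1608.01824 — 3 statements merged into one kernel-verified Lean document; each statement's English description precedes it below -/
import Mathlib

section
/- Let N be a Poisson random variable with mean λ > 0. Then for every positive integer r, E[|N - λ|^r] ≤ r^r (max(1, λ))^{r/2}. -/
open MeasureTheory ProbabilityTheory NNReal Real
open scoped ENNReal

lemma sumP (lam : ℝ≥0) (k : ℕ) :
    Summable (fun n : ℕ => poissonPMFReal lam n * ((n : ℝ) + 1) ^ k) := by
  have h2 : Summable (fun n : ℕ => Real.exp (-lam) * (2 ^ k * ((2 ^ k * lam) ^ n / n.factorial))) :=
    ((Real.summable_pow_div_factorial _).mul_left _).mul_left _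
  refine h2.of_nonneg_of_le
    (fun n => mul_nonneg poissonPMFReal_nonneg (by positivity)) (fun n => ?_)
  have key : ((n : ℝ) + 1) ^ k ≤ 2 ^ k * (2 ^ k : ℝ) ^ n := by
    have hb : ((n : ℝ) + 1) ≤ (2 : ℝ) ^ (n + 1) := by
      exact_mod_cast (Nat.lt_two_pow_self (n := n + 1)).le.trans' (by push_cast; omega)
    calc ((n : ℝ) + 1) ^ k ≤ ((2 : ℝ) ^ (n + 1)) ^ k := by gcongr
      _ = 2 ^ k * (2 ^ k : ℝ) ^ n := by rw [← pow_mul, ← pow_mul, ← pow_add]; ring_nf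
  have h1 : poissonPMFReal lam n * ((n : ℝ) + 1) ^ k
      = Real.exp (-lam) * ((lam : ℝ) ^ n * ((n : ℝ) + 1) ^ k / n.factorial) := by
    unfold poissonPMFReal; ring
  have h3 : (2 : ℝ) ^ k * ((2 ^ k * lam) ^ n / n.factorial)
      = (2 ^ k * (2 ^ k : ℝ) ^ n) * (lam : ℝ) ^ n / n.factorial := by
    rw [mul_pow]; ring
  rw [h1, h3]
  gcongr ?_ * (?_ / _)
  · nlinarith [key, pow_nonneg lam.coe_nonneg n, pow_nonneg (by norm_num : (0:ℝ) ≤ 2^k) n]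

lemma sumPf (lam : ℝ≥0) {f : ℕ → ℝ} (k : ℕ) (C : ℝ)
    (h : ∀ n : ℕ, |f n| ≤ C * ((n : ℝ) + 1) ^ k) :
    Summable (fun n : ℕ => poissonPMFReal lam n * f n) := by
  refine Summable.of_norm_bounded ((sumP lam k).mul_left C) (fun n => ?_)
  rw [norm_mul, Real.norm_eq_abs, Real.norm_eq_abs,
    abs_of_nonneg (poissonPMFReal_nonneg (n := n) (r := lam)), ← mul_assoc, mul_comm C, mul_assoc]
  exact mul_le_mul_of_nonneg_left (h n) poissonPMFReal_nonneg

/-- Chen-type identity for the Poisson pmf. -/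
lemma chen (lam : ℝ≥0) {f : ℕ → ℝ}
    (hs : Summable (fun n : ℕ => poissonPMFReal lam n * ((n : ℝ) * f n))) :
    ∑' n : ℕ, poissonPMFReal lam n * ((n : ℝ) * f n)
      = lam * ∑' n : ℕ, poissonPMFReal lam n * f (n + 1) := by
  have hshift : ∀ n : ℕ, poissonPMFReal lam (n + 1) * (((n : ℕ) + 1 : ℝ) * f (n + 1))
      = (lam : ℝ) * (poissonPMFReal lam n * f (n + 1)) := by
    intro n
    unfold poissonPMFReal
    rw [Nat.factorial_succ]
    push_cast
    field_simp
    ring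
  rw [Summable.tsum_eq_zero_add hs]
  simp only [Nat.cast_zero, zero_mul, mul_zero, zero_add]
  push_cast
  rw [tsum_congr (fun n => hshift n)]
  exact tsum_mul_left

lemma pow_sub_pow_le' (s : ℕ) {a b : ℝ} (hb : 0 ≤ b) (hba : b ≤ a) (hab : a ≤ b + 1) :
    a ^ (s + 1) - b ^ (s + 1) ≤ (s + 1 : ℝ) * a ^ s := by
  have ha : 0 ≤ a := hb.trans hba
  rw [← geom_sum₂_mul a b (s + 1)]
  calc (∑ i ∈ Finset.range (s + 1), a ^ i * b ^ (s + 1 - 1 - i)) * (a - b)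
      ≤ (∑ i ∈ Finset.range (s + 1), a ^ s) * 1 := by
        refine mul_le_mul ?_ (by linarith) (by linarith) (by positivity)
        refine Finset.sum_le_sum (fun i hi => ?_)
        simp only [Finset.mem_range] at hi
        calc a ^ i * b ^ (s + 1 - 1 - i) ≤ a ^ i * a ^ (s + 1 - 1 - i) := by
              gcongr
          _ = a ^ s := by rw [← pow_add]; congr 1; omega
    _ = (s + 1 : ℝ) * a ^ s := by
        rw [Finset.sum_const, Finset.card_range, nsmul_eq_mul, mul_one]; push_cast; ring

lemma g_diff (s : ℕ) (x : ℝ) :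
    |x + 1| ^ s * (x + 1) - |x| ^ s * x ≤ (s + 1 : ℝ) * (|x| + 1) ^ s := by
  rcases le_or_gt 0 x with hx | hx
  · rw [abs_of_nonneg hx, abs_of_nonneg (by linarith)]
    have := pow_sub_pow_le' s (a := x + 1) (b := x) hx (by linarith) (by linarith)
    calc (x + 1) ^ s * (x + 1) - x ^ s * x = (x + 1) ^ (s + 1) - x ^ (s + 1) := by ring
      _ ≤ (s + 1 : ℝ) * (x + 1) ^ s := this
  rcases le_or_gt (x + 1) 0 with hx1 | hx1
  · rw [abs_of_nonpos hx1, abs_of_nonpos (by linarith)]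
    have := pow_sub_pow_le' s (a := -x) (b := -(x + 1)) (by linarith) (by linarith) (by linarith)
    calc (-(x + 1)) ^ s * (x + 1) - (-x) ^ s * x
        = (-x) ^ (s + 1) - (-(x + 1)) ^ (s + 1) := by ring
      _ ≤ (s + 1 : ℝ) * (-x) ^ s := this
      _ ≤ (s + 1 : ℝ) * (-x + 1) ^ s := by gcongr <;> linarith
  · rw [abs_of_nonneg hx1.le, abs_of_nonpos hx.le]
    have h1 : (x + 1) ^ s * (x + 1) ≤ x + 1 :=
      mul_le_of_le_one_left (by linarith) (pow_le_one₀ (by linarith) (by linarith))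
    have h2 : (-x) ^ s * (-x) ≤ -x :=
      mul_le_of_le_one_left (by linarith) (pow_le_one₀ (by linarith) (by linarith))
    have h3 : (1 : ℝ) ≤ (-x + 1) ^ s := one_le_pow₀ (by linarith)
    have h4 : (1 : ℝ) ≤ (s + 1 : ℝ) := by have : (0:ℝ) ≤ s := Nat.cast_nonneg s; linarith
    nlinarith [h3, h4]

noncomputable def pA (lam : ℝ≥0) (r : ℕ) : ℝ :=
  ∑' n : ℕ, poissonPMFReal lam n * |(n : ℝ) - lam| ^ r

lemma habs (lam : ℝ≥0) (n : ℕ) : |(n : ℝ) - lam| ≤ (1 + lam) * ((n : ℝ) + 1) := by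
  rw [abs_sub_le_iff]
  constructor <;> nlinarith [lam.coe_nonneg, Nat.cast_nonneg (α := ℝ) n]

lemma sumA (lam : ℝ≥0) (k : ℕ) :
    Summable (fun n : ℕ => poissonPMFReal lam n * |(n : ℝ) - lam| ^ k) := by
  refine sumPf lam k ((1 + (lam : ℝ)) ^ k) (fun n => ?_)
  rw [abs_pow, abs_abs, ← mul_pow]
  exact pow_le_pow_left₀ (abs_nonneg _) (habs lam n) k

lemma step (lam : ℝ≥0) (d : ℕ) :
    pA lam (d + 2) ≤ lam * ((d + 1 : ℝ) * ∑' n : ℕ,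
      poissonPMFReal lam n * (|(n : ℝ) - lam| + 1) ^ d) := by
  set P := poissonPMFReal lam with hPdef
  set f : ℕ → ℝ := fun n => |(n : ℝ) - lam| ^ d * ((n : ℝ) - lam) with hfdef
  have hC : (0:ℝ) ≤ (1 + (lam:ℝ)) ^ (d+1) := by positivity
  have hfb : ∀ n : ℕ, |f n| ≤ (1 + (lam : ℝ)) ^ (d + 1) * ((n : ℝ) + 1) ^ (d + 1) := by
    intro n
    rw [hfdef]
    simp only [abs_mul, abs_pow, abs_abs, ← pow_succ, ← mul_pow]
    exact pow_le_pow_left₀ (abs_nonneg _) (habs lam n) _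
  have S1 : Summable (fun n : ℕ => P n * ((n : ℝ) * f n)) := by
    refine sumPf lam (d + 2) ((1 + (lam : ℝ)) ^ (d + 1)) (fun n => ?_)
    rw [abs_mul, Nat.abs_cast]
    calc (n : ℝ) * |f n| ≤ ((n : ℝ) + 1) * ((1 + (lam : ℝ)) ^ (d+1) * ((n : ℝ) + 1) ^ (d + 1)) := by
          refine mul_le_mul (by linarith) (hfb n) (abs_nonneg _) (by positivity)
      _ = (1 + (lam : ℝ)) ^ (d+1) * ((n : ℝ) + 1) ^ (d + 2) := by ring
  have S2 : Summable (fun n : ℕ => P n * f (n + 1)) := by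
    refine sumPf lam (d + 1) ((1 + (lam : ℝ)) ^ (d + 1) * 2 ^ (d + 1)) (fun n => ?_)
    calc |f (n + 1)| ≤ (1 + (lam : ℝ)) ^ (d+1) * ((n : ℝ) + 1 + 1) ^ (d + 1) := by
          have := hfb (n + 1); push_cast at this ⊢; linarith
      _ ≤ (1 + (lam : ℝ)) ^ (d+1) * ((2 : ℝ) * ((n : ℝ) + 1)) ^ (d + 1) := by
          have h2 : (n : ℝ) + 1 + 1 ≤ 2 * ((n : ℝ) + 1) := by
            have : (0:ℝ) ≤ (n:ℝ) := Nat.cast_nonneg n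
            linarith
          exact mul_le_mul_of_nonneg_left (pow_le_pow_left₀ (by positivity) h2 _) hC
      _ = (1 + (lam : ℝ)) ^ (d+1) * 2 ^ (d + 1) * ((n : ℝ) + 1) ^ (d + 1) := by
          rw [mul_pow]; ring
  have S3 : Summable (fun n : ℕ => P n * f n) :=
    sumPf lam (d + 1) ((1 + (lam : ℝ)) ^ (d + 1)) hfb
  have S4 : Summable (fun n : ℕ => P n * (|(n : ℝ) - lam| + 1) ^ d) := by
    refine sumPf lam d ((2 + (lam : ℝ)) ^ d) (fun n => ?_)
    have hn : (0:ℝ) ≤ (n:ℝ) := Nat.cast_nonneg n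
    have h1 : |(n : ℝ) - lam| + 1 ≤ (2 + (lam : ℝ)) * ((n : ℝ) + 1) := by
      have := habs lam n
      nlinarith [lam.coe_nonneg]
    rw [abs_of_nonneg (by positivity), ← mul_pow]
    exact pow_le_pow_left₀ (by positivity) h1 d
  -- main computation
  have hA : pA lam (d + 2) = ∑' n : ℕ, P n * ((n : ℝ) * f n) - (lam : ℝ) * ∑' n : ℕ, P n * f n := by
    rw [pA, ← _root_.tsum_mul_left, ← Summable.tsum_sub S1 (Summable.mul_left _ S3)]
    refine tsum_congr (fun n => ?_)
    have hx : |(n : ℝ) - lam| ^ (d + 2) = |(n : ℝ) - lam| ^ d * ((n : ℝ) - lam) ^ 2 := by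
      rw [pow_add, sq_abs]
    rw [hx, hfdef]
    ring
  have hchen := chen lam (f := f) S1
  have hsplit : ∑' n : ℕ, P n * (f (n + 1) - f n)
      = ∑' n : ℕ, P n * f (n + 1) - ∑' n : ℕ, P n * f n := by
    rw [← Summable.tsum_sub S2 S3]
    exact tsum_congr (fun n => by ring)
  have hmain : pA lam (d + 2) = (lam : ℝ) * ∑' n : ℕ, P n * (f (n + 1) - f n) := by
    rw [hA, hchen, hsplit, mul_sub]
  rw [hmain]
  refine mul_le_mul_of_nonneg_left ?_ lam.coe_nonneg
  rw [← _root_.tsum_mul_left]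
  have hsub : Summable (fun n : ℕ => P n * (f (n + 1) - f n)) := by
    refine ((S2.sub S3).congr (fun n => ?_)); ring
  refine Summable.tsum_le_tsum (fun n => ?_) hsub (Summable.mul_left _ S4)
  rw [← mul_assoc, mul_comm ((d:ℝ)+1) (P n), mul_assoc]
  refine mul_le_mul_of_nonneg_left ?_ poissonPMFReal_nonneg
  have hg := g_diff d ((n : ℝ) - lam)
  have hcast : ((n + 1 : ℕ) : ℝ) - lam = ((n : ℝ) - lam) + 1 := by push_cast; ring
  rw [hfdef]
  simp only [hcast]
  linarith [hg]

lemma pA_zero (lam : ℝ≥0) : pA lam 0 = 1 := by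
  have := (poissonPMFRealSum lam).tsum_eq
  rw [pA]
  simpa [poissonPMFReal] using this

lemma binom (lam : ℝ≥0) (d : ℕ) :
    ∑' n : ℕ, poissonPMFReal lam n * (|(n : ℝ) - lam| + 1) ^ d
      = ∑ k ∈ Finset.range (d + 1), (d.choose k : ℝ) * pA lam k := by
  have hterm : ∀ n : ℕ, poissonPMFReal lam n * (|(n : ℝ) - lam| + 1) ^ d
      = ∑ k ∈ Finset.range (d + 1),
          (d.choose k : ℝ) * (poissonPMFReal lam n * |(n : ℝ) - lam| ^ k) := by
    intro n
    rw [add_pow, Finset.mul_sum]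
    refine Finset.sum_congr rfl (fun k _ => ?_)
    rw [one_pow]
    ring
  rw [tsum_congr hterm, Summable.tsum_finsetSum (fun k _ => (sumA lam k).mul_left _)]
  refine Finset.sum_congr rfl (fun k _ => ?_)
  rw [_root_.tsum_mul_left, pA]

lemma pA_two (lam : ℝ≥0) : pA lam 2 ≤ lam := by
  have h := step lam 0
  have hb := binom lam 0
  simp only [Nat.choose_self, Nat.cast_one, Finset.sum_range_one, one_mul, Nat.cast_zero,
    zero_add, Nat.choose_zero_right, pow_zero] at h hb
  rw [hb, pA_zero, mul_one] at h
  exact h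

lemma abs_le_quad {x s : ℝ} (hs : 0 < s) : |x| ≤ |x| ^ 2 / (2 * s) + s / 2 := by
  have h : |x| ^ 2 / (2 * s) + s / 2 = (|x| ^ 2 + s ^ 2) / (2 * s) := by
    field_simp
  rw [h, le_div_iff₀ (by positivity)]
  nlinarith [sq_nonneg (|x| - s)]

lemma pA_one (lam : ℝ≥0) {s : ℝ} (hs1 : 1 ≤ s) (hss : (lam : ℝ) ≤ s ^ 2) : pA lam 1 ≤ s := by
  have hs0 : (0 : ℝ) < s := by linarith
  have hpt : ∀ n : ℕ, poissonPMFReal lam n * |(n : ℝ) - lam| ^ 1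
      ≤ poissonPMFReal lam n * (|(n : ℝ) - lam| ^ 2 / (2 * s) + s / 2) := by
    intro n
    refine mul_le_mul_of_nonneg_left ?_ poissonPMFReal_nonneg
    rw [pow_one]
    exact abs_le_quad hs0
  have hsum2 : Summable (fun n : ℕ =>
      poissonPMFReal lam n * (|(n : ℝ) - lam| ^ 2 / (2 * s) + s / 2)) :=
    (((sumA lam 2).div_const (2 * s)).add ((sumA lam 0).mul_right (s / 2))).congr
      (fun n => by ring)
  have h1 : pA lam 1 ≤ ∑' n : ℕ,
      poissonPMFReal lam n * (|(n : ℝ) - lam| ^ 2 / (2 * s) + s / 2) :=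
    Summable.tsum_le_tsum hpt (sumA lam 1) hsum2
  have h2 : ∑' n : ℕ, poissonPMFReal lam n * (|(n : ℝ) - lam| ^ 2 / (2 * s) + s / 2)
      = pA lam 2 / (2 * s) + s / 2 := by
    rw [tsum_congr (fun n : ℕ => show
        poissonPMFReal lam n * (|(n : ℝ) - lam| ^ 2 / (2 * s) + s / 2)
        = poissonPMFReal lam n * |(n : ℝ) - lam| ^ 2 / (2 * s)
          + poissonPMFReal lam n * |(n : ℝ) - lam| ^ 0 * (s / 2) by ring),
      Summable.tsum_add (((sumA lam 2).div_const _)) ((sumA lam 0).mul_right _),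
      tsum_div_const, _root_.tsum_mul_right, ← pA, ← pA, pA_zero, one_mul]
  rw [h2] at h1
  refine h1.trans ?_
  have h3 := pA_two lam
  rw [div_add_div _ _ (by positivity) (by norm_num), div_le_iff₀ (by positivity)]
  nlinarith [h3, hss]

lemma pA_le (lam : ℝ≥0) {s : ℝ} (hs1 : 1 ≤ s) (hss : (lam : ℝ) ≤ s ^ 2) :
    ∀ r : ℕ, pA lam r ≤ (r : ℝ) ^ r * s ^ r := by
  have hs0 : (0 : ℝ) < s := by linarith
  intro r
  induction r using Nat.strong_induction_on with
  | _ r IH =>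
    match r with
    | 0 => simp [pA_zero]
    | 1 => simpa using pA_one lam hs1 hss
    | (d + 2) =>
      have h := step lam d
      rw [binom lam d] at h
      have hSig : ∑ k ∈ Finset.range (d + 1), (d.choose k : ℝ) * pA lam k
          ≤ ((d : ℝ) * s + 1) ^ d := by
        calc ∑ k ∈ Finset.range (d + 1), (d.choose k : ℝ) * pA lam k
            ≤ ∑ k ∈ Finset.range (d + 1), (d.choose k : ℝ) * (((d : ℝ) * s) ^ k * 1 ^ (d - k)) := by
              refine Finset.sum_le_sum (fun k hk => ?_)
              simp only [Finset.mem_range] at hk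
              refine mul_le_mul_of_nonneg_left ?_ (Nat.cast_nonneg _)
              have h1 : pA lam k ≤ (k : ℝ) ^ k * s ^ k := IH k (by omega)
              have h2 : (k : ℝ) ^ k * s ^ k ≤ ((d : ℝ) * s) ^ k := by
                rw [← mul_pow]
                refine pow_le_pow_left₀ (by positivity) ?_ k
                have : (k : ℝ) ≤ (d : ℝ) := by exact_mod_cast Nat.lt_succ_iff.mp hk
                nlinarith
              rw [one_pow, mul_one]
              exact h1.trans h2
          _ = ((d : ℝ) * s + 1) ^ d := by
              rw [add_pow]
              refine Finset.sum_congr rfl (fun k _ => by ring)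
      have hstep2 : pA lam (d + 2) ≤ (lam : ℝ) * (((d : ℝ) + 1) * ((d : ℝ) * s + 1) ^ d) := by
        refine h.trans ?_
        have hd1 : (0:ℝ) ≤ (d : ℝ) + 1 := by positivity
        exact mul_le_mul_of_nonneg_left (mul_le_mul_of_nonneg_left hSig hd1) lam.coe_nonneg
      have hchain : (lam : ℝ) * (((d : ℝ) + 1) * ((d : ℝ) * s + 1) ^ d)
          ≤ ((d : ℝ) + 2) ^ (d + 2) * s ^ (d + 2) := by
        have hd0 : (0:ℝ) ≤ (d : ℝ) := Nat.cast_nonneg d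
        calc (lam : ℝ) * (((d : ℝ) + 1) * ((d : ℝ) * s + 1) ^ d)
            ≤ s ^ 2 * (((d : ℝ) + 1) * (((d : ℝ) + 1) * s) ^ d) := by
              gcongr <;> nlinarith
          _ = ((d : ℝ) + 1) ^ (d + 1) * s ^ (d + 2) := by
              rw [mul_pow]; ring
          _ ≤ ((d : ℝ) + 2) ^ (d + 2) * s ^ (d + 2) := by
              refine mul_le_mul_of_nonneg_right ?_ (by positivity)
              calc ((d : ℝ) + 1) ^ (d + 1) ≤ ((d : ℝ) + 2) ^ (d + 1) :=
                    pow_le_pow_left₀ (by positivity) (by linarith) _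
                _ ≤ ((d : ℝ) + 2) ^ (d + 2) :=
                    pow_le_pow_right₀ (by linarith) (by omega)
      refine (hstep2.trans hchain).trans (le_of_eq ?_)
      push_cast
      ring

/-- Central absolute moments of a Poisson random variable:
`E[|N - λ|^r] ≤ r^r (max 1 λ)^{r/2}`. -/
theorem poisson_central_moment (lam : ℝ≥0) (hlam : 0 < lam) (r : ℕ) (hr : 0 < r) :
    ∫⁻ n, ENNReal.ofReal (|(n : ℝ) - (lam : ℝ)| ^ r) ∂(poissonMeasure lam) ≤
      ENNReal.ofReal ((r : ℝ) ^ r * (max 1 (lam : ℝ)) ^ ((r : ℝ) / 2)) := by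
  have hm : (0 : ℝ) ≤ max 1 (lam : ℝ) := le_trans zero_le_one (le_max_left _ _)
  set s : ℝ := Real.sqrt (max 1 (lam : ℝ)) with hsdef
  have hs2 : s ^ 2 = max 1 (lam : ℝ) := Real.sq_sqrt hm
  have hs1 : (1 : ℝ) ≤ s := by
    nlinarith [Real.sqrt_nonneg (max 1 (lam : ℝ)), le_max_left (1:ℝ) (lam : ℝ)]
  have hss : (lam : ℝ) ≤ s ^ 2 := by rw [hs2]; exact le_max_right _ _
  -- convert lintegral to tsum
  have hconv : ∫⁻ n, ENNReal.ofReal (|(n : ℝ) - (lam : ℝ)| ^ r) ∂(poissonMeasure lam)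
      = ENNReal.ofReal (pA lam r) := by
    rw [lintegral_countable']
    have h1 : ∀ n : ℕ, ENNReal.ofReal (|(n : ℝ) - (lam : ℝ)| ^ r) * poissonMeasure lam {n}
        = ENNReal.ofReal (poissonPMFReal lam n * |(n : ℝ) - (lam : ℝ)| ^ r) := by
      intro n
      rw [poissonMeasure_singleton]
      show ENNReal.ofReal _ * ENNReal.ofReal (poissonPMFReal lam n) = _
      rw [← ENNReal.ofReal_mul (by positivity), mul_comm]
    rw [tsum_congr h1, pA,
      ← ENNReal.ofReal_tsum_of_nonneg (fun n => mul_nonneg poissonPMFReal_nonneg (by positivity))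
        (sumA lam r)]
  rw [hconv]
  refine ENNReal.ofReal_le_ofReal ?_
  have hle := pA_le lam hs1 hss r
  refine hle.trans ?_
  have hpow : s ^ r = (max 1 (lam : ℝ)) ^ ((r : ℝ) / 2) := by
    rw [hsdef, Real.sqrt_eq_rpow, ← Real.rpow_natCast ((max 1 (lam : ℝ)) ^ ((1:ℝ)/2)) r,
      ← Real.rpow_mul hm]
    congr 1
    ring
  rw [hpow]
end

section
/- Let m ≥ 1 and let (p_j), (q_j), (β_j) be real vectors with 0 ≤ p_j, q_j ≤ 1 and β_j ≥ 0, such that for some 0 ≤ ω ≤ 1/2 one has p_j ≥ q_j + q_j(1-q_j) ω β_j for all j. Let Z_j(p_j) (resp. Z_j(q_j)) be independent Bernoulli random variables with success probabilities p_j (resp. q_j). Then for every real A: P(Σ_j β_j Z_j(p_j) > A) ≥ exp(ω A - ω Σ_j β_j q_j - 2ω² Σ_j β_j²) · P(Σ_j β_j Z_j(q_j) > A). -/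
open MeasureTheory ProbabilityTheory NNReal ENNReal Finset

private def bw (a : ℝ) (b : Bool) : ℝ := if b then a else 1 - a

private lemma bw_nonneg {a : ℝ} (h0 : 0 ≤ a) (h1 : a ≤ 1) (b : Bool) : 0 ≤ bw a b := by
  cases b <;> simp [bw] <;> linarith

private lemma exp_le_inv_one_sub {y : ℝ} (hy : y < 1) : Real.exp y ≤ 1 / (1 - y) := by
  have h := Real.add_one_le_exp (-y)
  have h2 : 0 < 1 - y := by linarith
  rw [le_div_iff₀ h2]
  have : Real.exp y * (1 - y) ≤ Real.exp y * Real.exp (-y) := by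
    apply mul_le_mul_of_nonneg_left _ (Real.exp_nonneg y)
    linarith
  rw [← Real.exp_add] at this
  simpa using this

/-- scalar inequality for the `true` factor -/
private lemma scalar_true {a t : ℝ} (ha0 : 0 ≤ a) (ha1 : a ≤ 1) (ht : 0 ≤ t) :
    Real.exp ((1 - a) * t - 2 * t ^ 2) ≤ 1 + (1 - a) * min t (1 / 2) := by
  set c := 1 - a with hc
  have hc0 : 0 ≤ c := by linarith
  have hc1 : c ≤ 1 := by linarith
  have hmin0 : 0 ≤ min t (1/2) := le_min ht (by norm_num)
  by_cases hy : c * t - 2 * t ^ 2 ≤ 0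
  · calc Real.exp (c * t - 2 * t ^ 2) ≤ 1 := Real.exp_le_one_iff.mpr hy
      _ ≤ _ := by nlinarith
  · push_neg at hy
    have ht2 : t < 1 / 2 := by nlinarith
    have hmin : min t (1/2) = t := min_eq_left (by linarith)
    have hy1 : c * t - 2 * t ^ 2 < 1 := by nlinarith [sq_nonneg (c - 4 * t)]
    calc Real.exp (c * t - 2 * t ^ 2) ≤ 1 / (1 - (c * t - 2 * t ^ 2)) :=
          exp_le_inv_one_sub hy1
      _ ≤ 1 + c * min t (1/2) := by
          rw [hmin, div_le_iff₀ (by linarith)]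
          have hcsq : c ^ 2 ≤ 1 := by nlinarith
          nlinarith [mul_nonneg (sub_nonneg.mpr hcsq) (sq_nonneg t),
            mul_nonneg (mul_nonneg hc0 ht) (sq_nonneg t)]

/-- scalar inequality for the `false` factor -/
private lemma scalar_false {a t : ℝ} (ha0 : 0 ≤ a) (ha1 : a ≤ 1) (ht : 0 ≤ t) :
    Real.exp (-(a * t) - 2 * t ^ 2) ≤ 1 - a * min t (1 / 2) := by
  set s := min t (1/2) with hsdef
  have hs0 : 0 ≤ s := le_min ht (by norm_num)
  have hst : s ≤ t := min_le_left _ _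
  have hs2 : s ≤ 1/2 := min_le_right _ _
  have hx : a * s ≤ 1/2 := by nlinarith
  have step1 : Real.exp (-(a * t) - 2 * t ^ 2) ≤ Real.exp (-(a * s) - 2 * s ^ 2) := by
    apply Real.exp_le_exp.mpr
    nlinarith
  have step2 : Real.exp (-(a * s) - 2 * s ^ 2) * (1 + a * s + 2 * (a * s) ^ 2) ≤ 1 := by
    have h1 : 1 + a * s + 2 * (a * s) ^ 2 ≤ Real.exp (a * s + 2 * (a * s) ^ 2) := by
      have := Real.add_one_le_exp (a * s + 2 * (a * s) ^ 2)
      linarith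
    calc Real.exp (-(a * s) - 2 * s ^ 2) * (1 + a * s + 2 * (a * s) ^ 2)
        ≤ Real.exp (-(a * s) - 2 * s ^ 2) * Real.exp (a * s + 2 * (a * s) ^ 2) := by
          apply mul_le_mul_of_nonneg_left h1 (Real.exp_nonneg _)
      _ = Real.exp (2 * (a * s) ^ 2 - 2 * s ^ 2) := by rw [← Real.exp_add]; ring_nf
      _ ≤ 1 := by
          apply Real.exp_le_one_iff.mpr
          have hasq : a ^ 2 ≤ 1 := by nlinarith
          nlinarith [mul_nonneg (sub_nonneg.mpr hasq) (sq_nonneg s)]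
  have hpos : 0 < 1 + a * s + 2 * (a * s) ^ 2 := by nlinarith
  have step3 : Real.exp (-(a * s) - 2 * s ^ 2) ≤ 1 / (1 + a * s + 2 * (a * s) ^ 2) := by
    rw [le_div_iff₀ hpos]; exact step2
  have step4 : 1 / (1 + a * s + 2 * (a * s) ^ 2) ≤ 1 - a * s := by
    rw [div_le_iff₀ hpos]
    nlinarith [mul_nonneg (mul_nonneg ha0 hs0) (sq_nonneg (a * s))]
  linarith

/-- single–coordinate monotonicity for upward–closed sets -/
private lemma sum_single_mono (m : ℕ) (r r' : Fin m → ℝ) (i : Fin m)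
    (hr0 : ∀ j, 0 ≤ r j) (hr1 : ∀ j, r j ≤ 1) (hr'0 : ∀ j, 0 ≤ r' j) (hr'1 : ∀ j, r' j ≤ 1)
    (heq : ∀ j, j ≠ i → r j = r' j) (hle : r i ≤ r' i)
    (S : Finset (Fin m → Bool))
    (hS : ∀ v ∈ S, ∀ w : Fin m → Bool, (∀ j, v j = true → w j = true) → w ∈ S) :
    ∑ v ∈ S, ∏ j, bw (r j) (v j) ≤ ∑ v ∈ S, ∏ j, bw (r' j) (v j) := by
  classical
  set g : (Fin m → Bool) → ℝ := fun v => ∏ j ∈ univ.erase i, bw (r j) (v j) with hg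
  have hgnonneg : ∀ v, 0 ≤ g v := fun v =>
    Finset.prod_nonneg fun j _ => bw_nonneg (hr0 j) (hr1 j) (v j)
  have hg' : ∀ v, (∏ j ∈ univ.erase i, bw (r' j) (v j)) = g v := by
    intro v
    apply Finset.prod_congr rfl
    intro j hj
    rw [heq j (Finset.mem_erase.mp hj).1]
  have hsplit : ∀ (t : Fin m → ℝ), (∀ j, j ≠ i → t j = r j) →
      ∑ v ∈ S, ∏ j, bw (t j) (v j)
        = t i * ∑ v ∈ S.filter (fun v => v i = true), g v
          + (1 - t i) * ∑ v ∈ S.filter (fun v => v i = false), g v := by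
    intro t htr
    have hprod : ∀ v : Fin m → Bool, (∏ j, bw (t j) (v j)) = bw (t i) (v i) * g v := by
      intro v
      rw [← Finset.mul_prod_erase univ (fun j => bw (t j) (v j)) (Finset.mem_univ i)]
      congr 1
      apply Finset.prod_congr rfl
      intro j hj
      rw [htr j (Finset.mem_erase.mp hj).1]
    rw [Finset.sum_congr rfl fun v _ => hprod v]
    rw [← Finset.sum_filter_add_sum_filter_not S (fun v => v i = true)]
    rw [Finset.mul_sum, Finset.mul_sum]
    congr 1
    · apply Finset.sum_congr rfl
      intro v hv
      have : v i = true := (Finset.mem_filter.mp hv).2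
      simp [bw, this]
    · rw [Finset.sum_congr rfl (g := fun v => (1 - t i) * g v) ?_]
      · apply Finset.sum_congr ?_ fun v _ => rfl
        apply Finset.filter_congr
        intro v _
        simp
      · intro v hv
        have : ¬ (v i = true) := (Finset.mem_filter.mp hv).2
        simp only [Bool.not_eq_true] at this
        simp [bw, this]
  have hBA : ∑ v ∈ S.filter (fun v => v i = false), g v
      ≤ ∑ v ∈ S.filter (fun v => v i = true), g v := by
    set e : (Fin m → Bool) → (Fin m → Bool) := fun v => Function.update v i true with he
    have himg : (S.filter (fun v => v i = false)).image e ⊆ S.filter (fun v => v i = true) := by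
      intro w hw
      obtain ⟨v, hv, rfl⟩ := Finset.mem_image.mp hw
      obtain ⟨hvS, hvi⟩ := Finset.mem_filter.mp hv
      refine Finset.mem_filter.mpr ⟨hS v hvS _ ?_, ?_⟩
      · intro j hj
        by_cases hji : j = i
        · subst hji; simp [e]
        · rw [he]; simpa [Function.update_of_ne hji] using hj
      · simp [e]
    have hinj : Set.InjOn e (S.filter (fun v => v i = false)) := by
      intro v hv v' hv' hvv'
      have hvi : v i = false := (Finset.mem_filter.mp hv).2
      have hv'i : v' i = false := (Finset.mem_filter.mp hv').2
      funext j
      by_cases hji : j = i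
      · subst hji; rw [hvi, hv'i]
      · have := congrFun hvv' j
        simpa [e, Function.update_of_ne hji] using this
    have hge : ∀ v ∈ S.filter (fun v => v i = false), g (e v) = g v := by
      intro v _
      apply Finset.prod_congr rfl
      intro j hj
      rw [he]; simp [Function.update_of_ne (Finset.mem_erase.mp hj).1]
    calc ∑ v ∈ S.filter (fun v => v i = false), g v
        = ∑ v ∈ S.filter (fun v => v i = false), g (e v) :=
          (Finset.sum_congr rfl hge).symm
      _ = ∑ w ∈ (S.filter (fun v => v i = false)).image e, g w :=
          (Finset.sum_image (fun a ha b hb hab => hinj ha hb hab)).symm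
      _ ≤ ∑ v ∈ S.filter (fun v => v i = true), g v :=
          Finset.sum_le_sum_of_subset_of_nonneg himg fun v _ _ => hgnonneg v
  have h1 := hsplit r (fun j _ => rfl)
  have h2 := hsplit r' (fun j hj => (heq j hj).symm)
  rw [h1, h2]
  nlinarith [mul_nonneg (sub_nonneg.mpr hle) (sub_nonneg.mpr hBA)]


/-- coordinatewise monotonicity for upward–closed sets -/
private lemma sum_prod_mono (m : ℕ) (r s : Fin m → ℝ)
    (hs0 : ∀ j, 0 ≤ s j) (hsr : ∀ j, s j ≤ r j) (hr1 : ∀ j, r j ≤ 1)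
    (S : Finset (Fin m → Bool))
    (hS : ∀ v ∈ S, ∀ w : Fin m → Bool, (∀ j, v j = true → w j = true) → w ∈ S) :
    ∑ v ∈ S, ∏ j, bw (s j) (v j) ≤ ∑ v ∈ S, ∏ j, bw (r j) (v j) := by
  classical
  set mix : ℕ → Fin m → ℝ := fun k j => if (j : ℕ) < k then r j else s j with hmix
  have hmix0 : ∀ k j, 0 ≤ mix k j := by
    intro k j; by_cases h : (j : ℕ) < k <;> simp [hmix, h]
    exacts [le_trans (hs0 j) (hsr j), hs0 j]
  have hmix1 : ∀ k j, mix k j ≤ 1 := by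
    intro k j; by_cases h : (j : ℕ) < k <;> simp [hmix, h]
    exacts [hr1 j, le_trans (hsr j) (hr1 j)]
  have key : ∀ k, ∑ v ∈ S, ∏ j, bw (mix k j) (v j) ≤ ∑ v ∈ S, ∏ j, bw (mix (k+1) j) (v j) := by
    intro k
    by_cases hk : k < m
    · apply sum_single_mono m (mix k) (mix (k+1)) ⟨k, hk⟩ (hmix0 k) (hmix1 k)
        (hmix0 (k+1)) (hmix1 (k+1)) ?_ ?_ S hS
      · intro j hj
        have hjk : (j : ℕ) ≠ k := fun h => hj (Fin.ext h)
        have : (j : ℕ) < k ↔ (j : ℕ) < k + 1 := by omega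
        simp only [hmix]
        by_cases h : (j : ℕ) < k
        · rw [if_pos h, if_pos (this.mp h)]
        · rw [if_neg h, if_neg (fun h' => h (this.mpr h'))]
      · simp only [hmix, lt_irrefl, if_neg (lt_irrefl k), if_pos (Nat.lt_succ_self k)]
        exact hsr _
    · have : mix k = mix (k+1) := by
        funext j
        have : (j : ℕ) < k ∧ (j : ℕ) < k + 1 := ⟨lt_of_lt_of_le j.2 (not_lt.mp hk),
          lt_of_lt_of_le j.2 (by omega)⟩
        simp [hmix, this.1, this.2]
      rw [this]
  have mono : Monotone fun k => ∑ v ∈ S, ∏ j, bw (mix k j) (v j) :=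
    monotone_nat_of_le_succ key
  have h0 : mix 0 = s := by funext j; simp [hmix]
  have hm : mix m = r := by funext j; simp [hmix, j.2]
  calc ∑ v ∈ S, ∏ j, bw (s j) (v j) = ∑ v ∈ S, ∏ j, bw (mix 0 j) (v j) := by rw [h0]
    _ ≤ ∑ v ∈ S, ∏ j, bw (mix m j) (v j) := mono (Nat.zero_le m)
    _ = ∑ v ∈ S, ∏ j, bw (r j) (v j) := by rw [hm]

/-- measure of a set under a Bernoulli product measure as a real sum -/
private lemma measure_eq_sum (m : ℕ) (x : Fin m → ℝ≥0) (hx : ∀ j, (x j : ℝ≥0∞) ≤ 1)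
    (S : Set (Fin m → Bool)) [DecidablePred (· ∈ S)] :
    (Measure.pi fun j => (PMF.bernoulli (x j) (by exact_mod_cast hx j)).toMeasure) S
      = ENNReal.ofReal (∑ v ∈ Finset.univ.filter (· ∈ S), ∏ j, bw ((x j : ℝ)) (v j)) := by
  classical
  have hx1 : ∀ j, ((x j : ℝ)) ≤ 1 := by
    intro j
    have := hx j
    rw [show (1 : ℝ≥0∞) = ((1 : ℝ≥0) : ℝ≥0∞) by simp] at this
    exact_mod_cast this
  set μ := Measure.pi fun j => (PMF.bernoulli (x j) (by exact_mod_cast hx j)).toMeasure with hμ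
  have hdecomp : μ S = ∑ v ∈ Finset.univ.filter (· ∈ S), μ {v} := by
    have h : S = ⋃ v ∈ Finset.univ.filter (· ∈ S), ({v} : Set (Fin m → Bool)) := by
      ext w; simp
    nth_rewrite 1 [h]
    rw [measure_biUnion_finset (fun a _ b _ hab => Set.disjoint_singleton.mpr hab)
      (fun v _ => measurableSet_singleton _)]
  have hsing : ∀ v : Fin m → Bool, μ {v} = ENNReal.ofReal (∏ j, bw ((x j : ℝ)) (v j)) := by
    intro v
    have h1 : ({v} : Set (Fin m → Bool)) = Set.pi Set.univ (fun j => {v j}) := by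
      ext w; simp [funext_iff, Set.mem_pi]
    rw [hμ, h1, Measure.pi_pi]
    calc ∏ j, (PMF.bernoulli (x j) (by exact_mod_cast hx j)).toMeasure {v j}
        = ∏ j, ENNReal.ofReal (bw ((x j : ℝ)) (v j)) := by
          apply Finset.prod_congr rfl
          intro j _
          rw [PMF.toMeasure_apply_singleton _ _ (measurableSet_singleton _)]
          cases h : v j
          · simp only [PMF.bernoulli, PMF.ofFintype_apply, Bool.cond_false, bw, h,
              Bool.false_eq_true, if_false]
            rw [show ENNReal.ofReal (1 - (x j : ℝ))
                  = ENNReal.ofReal (1 : ℝ) - ENNReal.ofReal ((x j : ℝ)) from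
                ENNReal.ofReal_sub _ (x j).coe_nonneg,
              ENNReal.ofReal_one, ENNReal.ofReal_coe_nnreal]
          · simp [PMF.bernoulli, bw, h]
      _ = ENNReal.ofReal (∏ j, bw ((x j : ℝ)) (v j)) :=
          (ENNReal.ofReal_prod_of_nonneg (fun j _ => bw_nonneg ((x j).2) (hx1 j) (v j))).symm
  rw [hdecomp, Finset.sum_congr rfl (fun v _ => hsing v),
    ← ENNReal.ofReal_sum_of_nonneg]
  intro v _
  exact Finset.prod_nonneg fun j _ => bw_nonneg ((x j).2) (hx1 j) (v j)

/-- pointwise configuration inequality -/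
private lemma pointwise_ineq (m : ℕ) (qr t : Fin m → ℝ)
    (hq0 : ∀ j, 0 ≤ qr j) (hq1 : ∀ j, qr j ≤ 1) (ht : ∀ j, 0 ≤ t j) (v : Fin m → Bool) :
    Real.exp (∑ j, ((if v j then (1 - qr j) * t j else -(qr j * t j)) - 2 * t j ^ 2))
        * ∏ j, bw (qr j) (v j)
      ≤ ∏ j, bw (qr j + qr j * (1 - qr j) * min (t j) (1 / 2)) (v j) := by
  rw [Real.exp_sum, ← Finset.prod_mul_distrib]
  apply Finset.prod_le_prod
  · intro j _
    exact mul_nonneg (Real.exp_nonneg _) (bw_nonneg (hq0 j) (hq1 j) (v j))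
  · intro j _
    have hmin0 : 0 ≤ min (t j) (1/2) := le_min (ht j) (by norm_num)
    cases h : v j
    · simp only [bw, h, Bool.false_eq_true, if_false]
      have h2 := scalar_false (hq0 j) (hq1 j) (ht j)
      calc Real.exp (-(qr j * t j) - 2 * t j ^ 2) * (1 - qr j)
          ≤ (1 - qr j * min (t j) (1/2)) * (1 - qr j) :=
            mul_le_mul_of_nonneg_right h2 (by linarith [hq1 j])
        _ = 1 - (qr j + qr j * (1 - qr j) * min (t j) (1/2)) := by ring
    · simp only [bw, h, if_true]
      have h2 := scalar_true (hq0 j) (hq1 j) (ht j)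
      calc Real.exp ((1 - qr j) * t j - 2 * t j ^ 2) * qr j
          ≤ (1 + (1 - qr j) * min (t j) (1/2)) * qr j :=
            mul_le_mul_of_nonneg_right h2 (hq0 j)
        _ = qr j + qr j * (1 - qr j) * min (t j) (1/2) := by ring

/-- Change-of-measure inequality for weighted sums of independent Bernoulli
random variables: if `p_j ≥ q_j + q_j(1-q_j) ω β_j` for all `j`, then
`P(Σ β_j Z_j(p_j) > A) ≥ exp(ωA - ω Σ β_j q_j - 2ω² Σ β_j²) P(Σ β_j Z_j(q_j) > A)`. -/
theorem bernoulli_change_of_measure (m : ℕ) (hm : 1 ≤ m)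
    (p q : Fin m → ℝ≥0) (hp : ∀ j, (p j : ℝ≥0∞) ≤ 1) (hq : ∀ j, (q j : ℝ≥0∞) ≤ 1)
    (β : Fin m → ℝ) (hβ : ∀ j, 0 ≤ β j)
    (ω : ℝ) (hω0 : 0 ≤ ω) (hω : ω ≤ 1/2)
    (hpq : ∀ j, (q j : ℝ) + (q j : ℝ) * (1 - (q j : ℝ)) * ω * β j ≤ (p j : ℝ))
    (A : ℝ) :
    ENNReal.ofReal (Real.exp (ω * A - ω * ∑ j, β j * (q j : ℝ) - 2 * ω ^ 2 * ∑ j, (β j) ^ 2)) *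
        (Measure.pi fun j => (PMF.bernoulli (q j) (by exact_mod_cast hq j)).toMeasure)
          {ω' : Fin m → Bool | A < ∑ j, β j * (if ω' j then 1 else 0)} ≤
      (Measure.pi fun j => (PMF.bernoulli (p j) (by exact_mod_cast hp j)).toMeasure)
        {ω' : Fin m → Bool | A < ∑ j, β j * (if ω' j then 1 else 0)} := by
  classical
  set S : Set (Fin m → Bool) := {ω' : Fin m → Bool | A < ∑ j, β j * (if ω' j then 1 else 0)}
    with hSdef
  have hq1 : ∀ j, ((q j : ℝ)) ≤ 1 := by
    intro j
    have h : (q j : ℝ≥0) ≤ 1 := by exact_mod_cast hq j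
    exact_mod_cast h
  have hp1 : ∀ j, ((p j : ℝ)) ≤ 1 := by
    intro j
    have h : (p j : ℝ≥0) ≤ 1 := by exact_mod_cast hp j
    exact_mod_cast h
  set s : Fin m → ℝ := fun j =>
    (q j : ℝ) + (q j : ℝ) * (1 - (q j : ℝ)) * min (ω * β j) (1/2) with hsdef
  have hs0 : ∀ j, 0 ≤ s j := by
    intro j
    have hmin0 : 0 ≤ min (ω * β j) (1/2) :=
      le_min (mul_nonneg hω0 (hβ j)) (by norm_num)
    have h1 := (q j).coe_nonneg
    simp only [hsdef]
    nlinarith [mul_nonneg (mul_nonneg (q j).coe_nonneg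
      (sub_nonneg.mpr (hq1 j))) hmin0]
  have hsp : ∀ j, s j ≤ (p j : ℝ) := by
    intro j
    have h1 : min (ω * β j) (1/2) ≤ ω * β j := min_le_left _ _
    have h2 : (0:ℝ) ≤ (q j : ℝ) * (1 - (q j : ℝ)) :=
      mul_nonneg (q j).coe_nonneg (by linarith [hq1 j])
    have h3 := hpq j
    simp only [hsdef]
    nlinarith
  rw [measure_eq_sum m q hq S, measure_eq_sum m p hp S,
    ← ENNReal.ofReal_mul (Real.exp_pos _).le]
  apply ENNReal.ofReal_le_ofReal
  set F := Finset.univ.filter (· ∈ S) with hF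
  have hup : ∀ v ∈ F, ∀ w : Fin m → Bool, (∀ j, v j = true → w j = true) → w ∈ F := by
    intro v hv w hw
    simp only [hF, hSdef, Finset.mem_filter, Set.mem_setOf_eq] at hv ⊢
    refine ⟨Finset.mem_univ _, lt_of_lt_of_le hv.2 ?_⟩
    apply Finset.sum_le_sum
    intro j _
    by_cases h : v j = true
    · rw [h, hw j h]
    · simp only [Bool.not_eq_true] at h
      rw [h]
      cases h2 : w j
      · exact le_refl _
      · simpa using hβ j
  calc Real.exp (ω * A - ω * ∑ j, β j * (q j : ℝ) - 2 * ω ^ 2 * ∑ j, (β j) ^ 2)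
        * ∑ v ∈ F, ∏ j, bw ((q j : ℝ)) (v j)
      ≤ ∑ v ∈ F, ∏ j, bw (s j) (v j) := by
        rw [Finset.mul_sum]
        apply Finset.sum_le_sum
        intro v hv
        have hv' : A < ∑ j, β j * (if v j then 1 else 0) := by
          have := (Finset.mem_filter.mp hv).2
          simpa [hSdef] using this
        have hexp : ω * A - ω * ∑ j, β j * (q j : ℝ) - 2 * ω ^ 2 * ∑ j, (β j) ^ 2
            ≤ ∑ j, ((if v j then (1 - (q j : ℝ)) * (ω * β j) else -((q j : ℝ) * (ω * β j)))
                - 2 * (ω * β j) ^ 2) := by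
          have hterm : ∀ j, ((if v j then (1 - (q j : ℝ)) * (ω * β j)
                else -((q j : ℝ) * (ω * β j))) - 2 * (ω * β j) ^ 2)
              = ω * (β j * (if v j then 1 else 0)) - ω * (β j * (q j : ℝ))
                - 2 * ω ^ 2 * (β j) ^ 2 := by
            intro j; cases v j <;> simp <;> ring
          rw [Finset.sum_congr rfl fun j _ => hterm j]
          rw [Finset.sum_sub_distrib, Finset.sum_sub_distrib, ← Finset.mul_sum,
            ← Finset.mul_sum, ← Finset.mul_sum]
          have : ω * A ≤ ω * ∑ j, β j * (if v j then 1 else 0) :=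
            mul_le_mul_of_nonneg_left (le_of_lt hv') hω0
          linarith
        calc Real.exp (ω * A - ω * ∑ j, β j * (q j : ℝ) - 2 * ω ^ 2 * ∑ j, (β j) ^ 2)
              * ∏ j, bw ((q j : ℝ)) (v j)
            ≤ Real.exp (∑ j, ((if v j then (1 - (q j : ℝ)) * (ω * β j)
                  else -((q j : ℝ) * (ω * β j))) - 2 * (ω * β j) ^ 2))
              * ∏ j, bw ((q j : ℝ)) (v j) := by
              apply mul_le_mul_of_nonneg_right (Real.exp_le_exp.mpr hexp)
              exact Finset.prod_nonneg fun j _ => bw_nonneg (q j).coe_nonneg (hq1 j) (v j)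
          _ ≤ ∏ j, bw (s j) (v j) := by
              have := pointwise_ineq m (fun j => (q j : ℝ)) (fun j => ω * β j)
                (fun j => (q j).coe_nonneg) hq1 (fun j => mul_nonneg hω0 (hβ j)) v
              simpa [hsdef] using this
    _ ≤ ∑ v ∈ F, ∏ j, bw ((p j : ℝ)) (v j) :=
        sum_prod_mono m (fun j => (p j : ℝ)) s hs0 hsp hp1 F hup
end

section
/- Let m ≥ 3 and let ε_1, ..., ε_m be independent real random variables satisfying E[|ε_i|^r] ≤ A^r r^r for all i and all integers r ≥ 2, where A > 0. Let ω_1, ..., ω_m > 0 be weights, p ≥ 1 an integer, and t > 0. Then P( Σ_{i=1}^m ω_i (ε_i^p − E[ε_i^p]) ≥ 2e(2Ap)^p max(‖ω‖₂, ‖ω‖_∞ t^p) t ) ≤ m e^{2−t}. -/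
open MeasureTheory ProbabilityTheory NNReal ENNReal

set_option maxHeartbeats 1000000

section RosenthalAux

open MeasureTheory ProbabilityTheory Finset

variable {Ω : Type*} [MeasurableSpace Ω] {μ : Measure Ω} [IsProbabilityMeasure μ]

lemma indep_prod_integral {m : ℕ} (η : Fin m → Ω → ℝ) (hmeas : ∀ i, Measurable (η i))
    (hind : iIndepFun η μ) (hint : ∀ i, Integrable (η i) μ)
    (s : Finset (Fin m)) :
    Integrable (fun ω => ∏ i ∈ s, η i ω) μ ∧
      (∫ ω, ∏ i ∈ s, η i ω ∂μ) = ∏ i ∈ s, ∫ ω, η i ω ∂μ := by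
  classical
  induction s using Finset.cons_induction with
  | empty => simp
  | cons a s has ih =>
    have hIF : IndepFun (η a) (∏ j ∈ s, η j) μ :=
      (hind.indepFun_finset_prod_of_notMem hmeas has).symm
    have hps : (fun ω => ∏ i ∈ s, η i ω) = (∏ j ∈ s, η j) := by
      ext ω; simp
    have hint1 : Integrable (∏ j ∈ s, η j) μ := hps ▸ ih.1
    have hmul : Integrable (η a * ∏ j ∈ s, η j) μ :=
      hIF.integrable_mul (hint a) hint1
    have hfun : (fun ω => ∏ i ∈ cons a s has, η i ω)
        = (η a * ∏ j ∈ s, η j) := by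
      ext ω; rw [Finset.prod_cons]; simp
    constructor
    · rw [hfun]; exact hmul
    · calc (∫ ω, ∏ i ∈ cons a s has, η i ω ∂μ)
          = integral μ (η a * ∏ j ∈ s, η j) := by rw [← hfun]
        _ = integral μ (η a) * integral μ (∏ j ∈ s, η j) :=
            hIF.integral_mul_eq_mul_integral (hint a).aestronglyMeasurable hint1.aestronglyMeasurable
        _ = ∏ i ∈ cons a s has, ∫ ω, η i ω ∂μ := by
            rw [Finset.prod_cons, ← ih.2, hps]

lemma multinomial_subset {ι : Type*} [DecidableEq ι] {s t : Finset ι} (hst : s ⊆ t)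
    (k : ι → ℕ) (hk : ∀ i ∈ t, i ∉ s → k i = 0) :
    Nat.multinomial t k = Nat.multinomial s k := by
  have hprod : ∏ i ∈ t, (k i).factorial = ∏ i ∈ s, (k i).factorial := by
    refine (Finset.prod_subset hst ?_).symm
    intro i hit his
    rw [hk i hit his]
    rfl
  have hsum : ∑ i ∈ t, k i = ∑ i ∈ s, k i := by
    apply (Finset.sum_subset hst _).symm
    intro i hit his; exact hk i hit his
  have h1 := Nat.multinomial_spec t k
  have h2 := Nat.multinomial_spec s k
  rw [hsum, ← h2, hprod] at h1
  exact Nat.eq_of_mul_eq_mul_left (Finset.prod_pos fun i _ => Nat.factorial_pos _) h1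

lemma pointwise_interp {x lam : ℝ} {k q : ℕ} (hlam : 0 < lam) (hk2 : 2 ≤ k) (hkq : k ≤ q)
    (hqe : Even q) : |x| ^ k * lam ^ (q - k) ≤ lam ^ (q - 2) * x ^ 2 + x ^ q := by
  rcases le_total |x| lam with h | h
  · have h1 : |x| ^ k * lam ^ (q - k) ≤ lam ^ (q - 2) * x ^ 2 := by
      have : |x| ^ k = x ^ 2 * |x| ^ (k - 2) := by
        rw [← sq_abs, ← pow_add]
        congr 1
        omega
      rw [this]
      have h2 : |x| ^ (k - 2) ≤ lam ^ (k - 2) := pow_le_pow_left₀ (abs_nonneg _) h _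
      calc x ^ 2 * |x| ^ (k - 2) * lam ^ (q - k)
          ≤ x ^ 2 * lam ^ (k - 2) * lam ^ (q - k) := by
            apply mul_le_mul_of_nonneg_right _ (by positivity)
            exact mul_le_mul_of_nonneg_left h2 (sq_nonneg _)
        _ = lam ^ (q - 2) * x ^ 2 := by
            rw [mul_assoc, ← pow_add]
            rw [show k - 2 + (q - k) = q - 2 by omega]
            ring
    calc |x| ^ k * lam ^ (q - k) ≤ lam ^ (q - 2) * x ^ 2 := h1
      _ ≤ lam ^ (q - 2) * x ^ 2 + x ^ q := le_add_of_nonneg_right (hqe.pow_nonneg _)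
  · have h1 : |x| ^ k * lam ^ (q - k) ≤ x ^ q := by
      calc |x| ^ k * lam ^ (q - k) ≤ |x| ^ k * |x| ^ (q - k) := by
            apply mul_le_mul_of_nonneg_left _ (by positivity)
            exact pow_le_pow_left₀ hlam.le h _
        _ = |x| ^ q := by rw [← pow_add]; congr 1; omega
        _ = x ^ q := hqe.pow_abs x
    calc |x| ^ k * lam ^ (q - k) ≤ x ^ q := h1
      _ ≤ lam ^ (q - 2) * x ^ 2 + x ^ q := le_add_of_nonneg_left (by positivity)

lemma rosenthal_core {m : ℕ} (ξ : Fin m → Ω → ℝ) (hmeas : ∀ i, Measurable (ξ i))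
    (hind : iIndepFun ξ μ)
    (q : ℕ) (hq2 : 2 ≤ q) (hqe : Even q)
    (hint : ∀ i, ∀ k, k ≤ q → Integrable (fun ω => ξ i ω ^ k) μ)
    (hcent : ∀ i, (∫ ω, ξ i ω ∂μ) = 0)
    (lam : ℝ) (hlam : 0 < lam)
    (hsa : ∑ i, (∫ ω, ξ i ω ^ q ∂μ) ≤ lam ^ q)
    (hsb : ∑ i, (∫ ω, ξ i ω ^ 2 ∂μ) ≤ lam ^ 2) :
    Integrable (fun ω => (∑ i, ξ i ω) ^ q) μ ∧
      (∫ ω, (∑ i, ξ i ω) ^ q ∂μ) ≤ (2 * q : ℝ) ^ q * lam ^ q := by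
  classical
  set a : Fin m → ℝ := fun i => ∫ ω, ξ i ω ^ q ∂μ with ha_def
  set b : Fin m → ℝ := fun i => ∫ ω, ξ i ω ^ 2 ∂μ with hb_def
  have ha0 : ∀ i, 0 ≤ a i := fun i => integral_nonneg fun ω => hqe.pow_nonneg _
  have hb0 : ∀ i, 0 ≤ b i := fun i => integral_nonneg fun ω => sq_nonneg _
  set c : Fin m → ℝ := fun i => b i / lam ^ 2 + a i / lam ^ q with hc_def
  have hc0 : ∀ i, 0 ≤ c i := fun i => by
    have := ha0 i; have := hb0 i; positivity
  have hcsum : ∑ i, c i ≤ 2 := by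
    rw [hc_def, Finset.sum_add_distrib, ← Finset.sum_div, ← Finset.sum_div]
    have h1 : (∑ i, b i) / lam ^ 2 ≤ 1 := by
      rw [div_le_one (by positivity)]; exact hsb
    have h2 : (∑ i, a i) / lam ^ q ≤ 1 := by
      rw [div_le_one (by positivity)]; exact hsa
    linarith
  -- moment bound
  have hmom : ∀ i, ∀ k, 2 ≤ k → k ≤ q → |∫ ω, ξ i ω ^ k ∂μ| ≤ lam ^ k * c i := by
    intro i k hk2 hkq
    have habs : |∫ ω, ξ i ω ^ k ∂μ| ≤ ∫ ω, |ξ i ω| ^ k ∂μ := by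
      have h := norm_integral_le_integral_norm (μ := μ) (fun ω => ξ i ω ^ k)
      simpa [Real.norm_eq_abs, abs_pow] using h
    have hintk : Integrable (fun ω => |ξ i ω| ^ k) μ := by
      simpa [abs_pow] using (hint i k hkq).abs
    have key : (∫ ω, |ξ i ω| ^ k ∂μ) * lam ^ (q - k) ≤ lam ^ (q - 2) * b i + a i := by
      have hle : ∀ ω, |ξ i ω| ^ k * lam ^ (q - k)
          ≤ lam ^ (q - 2) * ξ i ω ^ 2 + ξ i ω ^ q :=
        fun ω => pointwise_interp hlam hk2 hkq hqe
      have hint2 : Integrable (fun ω => lam ^ (q - 2) * ξ i ω ^ 2 + ξ i ω ^ q) μ :=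
        ((hint i 2 hq2).const_mul _).add (hint i q le_rfl)
      calc (∫ ω, |ξ i ω| ^ k ∂μ) * lam ^ (q - k)
          = ∫ ω, |ξ i ω| ^ k * lam ^ (q - k) ∂μ := (integral_mul_const _ _).symm
        _ ≤ ∫ ω, lam ^ (q - 2) * ξ i ω ^ 2 + ξ i ω ^ q ∂μ :=
            integral_mono (hintk.mul_const _) hint2 hle
        _ = lam ^ (q - 2) * b i + a i := by
            rw [integral_add ((hint i 2 hq2).const_mul _) (hint i q le_rfl),
              integral_const_mul]
    have hX : (∫ ω, |ξ i ω| ^ k ∂μ) ≤ (lam ^ (q - 2) * b i + a i) / lam ^ (q - k) :=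
      (le_div_iff₀ (by positivity)).mpr key
    refine habs.trans (hX.trans ?_)
    obtain ⟨e, rfl⟩ : ∃ e, k = 2 + e := ⟨k - 2, by omega⟩
    obtain ⟨j, rfl⟩ : ∃ j, q = 2 + e + j := ⟨q - (2 + e), by omega⟩
    rw [show 2 + e + j - (2 + e) = j by omega, show 2 + e + j - 2 = e + j by omega,
      hc_def]
    have hl : lam ≠ 0 := hlam.ne'
    apply le_of_eq
    field_simp
    ring

  -- products of independent powers
  have hprod : ∀ k : Fin m → ℕ, k ∈ piAntidiag (univ : Finset (Fin m)) q →
      Integrable (fun ω => ∏ i, ξ i ω ^ k i) μ ∧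
        (∫ ω, ∏ i, ξ i ω ^ k i ∂μ) = ∏ i, ∫ ω, ξ i ω ^ k i ∂μ := by
    intro k hk
    rw [Finset.mem_piAntidiag] at hk
    have hkle : ∀ i, k i ≤ q := by
      intro i
      rw [← hk.1]
      exact Finset.single_le_sum (fun j _ => Nat.zero_le _) (Finset.mem_univ i)
    exact indep_prod_integral (fun i ω => ξ i ω ^ k i)
      (fun i => (hmeas i).pow_const _)
      (hind.comp (fun i x => x ^ k i) (fun i => measurable_id.pow_const _))
      (fun i => hint i (k i) (hkle i)) Finset.univ
  have hexp : (fun ω => (∑ i, ξ i ω) ^ q)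
      = fun ω => ∑ k ∈ piAntidiag (univ : Finset (Fin m)) q,
          (Nat.multinomial univ k : ℝ) * ∏ i, ξ i ω ^ k i :=
    funext fun ω => Finset.sum_pow_eq_sum_piAntidiag univ (fun i => ξ i ω) q
  have hIq : Integrable (fun ω => (∑ i, ξ i ω) ^ q) μ := by
    rw [hexp]
    exact integrable_finset_sum _ fun k hk => ((hprod k hk).1.const_mul _)
  refine ⟨hIq, ?_⟩
  have hval : (∫ ω, (∑ i, ξ i ω) ^ q ∂μ)
      = ∑ k ∈ piAntidiag (univ : Finset (Fin m)) q,
          (Nat.multinomial univ k : ℝ) * ∏ i, ∫ ω, ξ i ω ^ k i ∂μ := by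
    rw [hexp, integral_finset_sum _ fun k hk => ((hprod k hk).1.const_mul _)]
    refine Finset.sum_congr rfl fun k hk => ?_
    rw [integral_const_mul, (hprod k hk).2]
  rw [hval]
  set F : (Fin m → ℕ) → ℝ := fun k =>
    (Nat.multinomial (univ : Finset (Fin m)) k : ℝ) * ∏ i, ∫ ω, ξ i ω ^ k i ∂μ with hF_def
  set T := (piAntidiag (univ : Finset (Fin m)) q).filter (fun k => ∀ i, k i ≠ 1) with hT_def
  have hfil : ∑ k ∈ piAntidiag (univ : Finset (Fin m)) q, F k = ∑ k ∈ T, F k := by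
    refine (Finset.sum_filter_of_ne ?_).symm
    intro k _ hF i hki
    apply hF
    have hz : (∫ ω, ξ i ω ^ k i ∂μ) = 0 := by rw [hki]; simpa using hcent i
    rw [hF_def]
    exact mul_eq_zero_of_right _ (Finset.prod_eq_zero (Finset.mem_univ i) hz)
  have hFle : ∀ k ∈ T, F k ≤ (Nat.multinomial (univ : Finset (Fin m)) k : ℝ) *
      (lam ^ q * ∏ i ∈ univ.filter (fun i => k i ≠ 0), c i) := by
    intro k hkT
    rw [hT_def, Finset.mem_filter] at hkT
    obtain ⟨hk, hk1⟩ := hkT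
    rw [Finset.mem_piAntidiag] at hk
    have hkle : ∀ i, k i ≤ q := by
      intro i
      rw [← hk.1]
      exact Finset.single_le_sum (fun j _ => Nat.zero_le _) (Finset.mem_univ i)
    apply mul_le_mul_of_nonneg_left _ (Nat.cast_nonneg _)
    have hredu : ∏ i, ∫ ω, ξ i ω ^ k i ∂μ
        = ∏ i ∈ univ.filter (fun i => k i ≠ 0), ∫ ω, ξ i ω ^ k i ∂μ := by
      refine (Finset.prod_filter_of_ne ?_).symm
      intro i _ hne
      intro h0
      apply hne
      simp [h0]
    rw [hredu]
    calc ∏ i ∈ univ.filter (fun i => k i ≠ 0), ∫ ω, ξ i ω ^ k i ∂μ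
        ≤ |∏ i ∈ univ.filter (fun i => k i ≠ 0), ∫ ω, ξ i ω ^ k i ∂μ| := le_abs_self _
      _ = ∏ i ∈ univ.filter (fun i => k i ≠ 0), |∫ ω, ξ i ω ^ k i ∂μ| :=
          Finset.abs_prod _ _
      _ ≤ ∏ i ∈ univ.filter (fun i => k i ≠ 0), lam ^ k i * c i := by
          refine Finset.prod_le_prod (fun i _ => abs_nonneg _) ?_
          intro i hi
          rw [Finset.mem_filter] at hi
          have h2 : 2 ≤ k i := by have := hk1 i; have := hi.2; omega
          exact hmom i (k i) h2 (hkle i)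
      _ = lam ^ q * ∏ i ∈ univ.filter (fun i => k i ≠ 0), c i := by
          rw [Finset.prod_mul_distrib, Finset.prod_pow_eq_pow_sum]
          congr 2
          rw [Finset.sum_filter_ne_zero]
          exact hk.1
  have hstep : ∑ k ∈ T, F k ≤ ∑ k ∈ T, (Nat.multinomial (univ : Finset (Fin m)) k : ℝ) *
      (lam ^ q * ∏ i ∈ univ.filter (fun i => k i ≠ 0), c i) :=
    Finset.sum_le_sum hFle
  -- group by support
  have hmaps : ∀ k ∈ T, (univ.filter (fun i => k i ≠ 0)) ∈ (univ : Finset (Fin m)).powerset :=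
    fun k _ => Finset.mem_powerset.mpr (Finset.filter_subset _ _)
  have hgroup : ∑ k ∈ T, (Nat.multinomial (univ : Finset (Fin m)) k : ℝ) *
      (lam ^ q * ∏ i ∈ univ.filter (fun i => k i ≠ 0), c i)
      = ∑ I ∈ (univ : Finset (Fin m)).powerset,
          ∑ k ∈ T.filter (fun k => univ.filter (fun i => k i ≠ 0) = I),
            (Nat.multinomial (univ : Finset (Fin m)) k : ℝ) *
              (lam ^ q * ∏ i ∈ I, c i) := by
    rw [← Finset.sum_fiberwise_of_maps_to hmaps]
    refine Finset.sum_congr rfl fun I _ => Finset.sum_congr rfl fun k hk => ?_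
    rw [Finset.mem_filter] at hk
    rw [hk.2]
  have hfib : ∀ I ∈ (univ : Finset (Fin m)).powerset,
      (∑ k ∈ T.filter (fun k => univ.filter (fun i => k i ≠ 0) = I),
        (Nat.multinomial (univ : Finset (Fin m)) k : ℝ)) ≤ ((q : ℝ) / 2) ^ q := by
    intro I _
    rcases Finset.eq_empty_or_nonempty
        (T.filter (fun k : Fin m → ℕ => univ.filter (fun i => k i ≠ 0) = I)) with he | hne
    · rw [he, Finset.sum_empty]
      positivity
    · obtain ⟨k₀, hk₀⟩ := hne
      rw [Finset.mem_filter, hT_def, Finset.mem_filter, Finset.mem_piAntidiag] at hk₀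
      obtain ⟨⟨⟨hk₀sum, _⟩, hk₀1⟩, hk₀I⟩ := hk₀
      have hmem : ∀ i, i ∈ I ↔ k₀ i ≠ 0 := by
        intro i
        rw [← hk₀I, Finset.mem_filter]
        simp
      have hcard : 2 * I.card ≤ q := by
        have h2 : ∀ i ∈ I, 2 ≤ k₀ i := by
          intro i hi
          have := (hmem i).mp hi
          have := hk₀1 i
          omega
        have hsm := Finset.card_nsmul_le_sum I k₀ 2 h2
        have hIsum : ∑ i ∈ I, k₀ i = q := by
          rw [← hk₀sum]
          refine Finset.sum_subset (Finset.subset_univ I) ?_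
          intro i _ hiI
          by_contra h0
          exact hiI ((hmem i).mpr h0)
        rw [hIsum] at hsm
        simpa [smul_eq_mul, mul_comm] using hsm
      have hsub : T.filter (fun k => univ.filter (fun i => k i ≠ 0) = I)
          ⊆ piAntidiag I q := by
        intro k hk
        rw [Finset.mem_filter, hT_def, Finset.mem_filter, Finset.mem_piAntidiag] at hk
        obtain ⟨⟨⟨hksum, _⟩, _⟩, hkI⟩ := hk
        rw [Finset.mem_piAntidiag]
        constructor
        · rw [← hksum]
          refine Finset.sum_subset (Finset.subset_univ I) ?_
          intro i _ hiI
          by_contra h0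
          apply hiI
          rw [← hkI, Finset.mem_filter]
          exact ⟨Finset.mem_univ i, h0⟩
        · intro i h0
          rw [← hkI, Finset.mem_filter]
          exact ⟨Finset.mem_univ i, h0⟩
      have hcongr : ∀ k ∈ T.filter (fun k => univ.filter (fun i => k i ≠ 0) = I),
          (Nat.multinomial (univ : Finset (Fin m)) k : ℝ)
            = (Nat.multinomial I k : ℝ) := by
        intro k hk
        rw [Finset.mem_filter] at hk
        have := hk.2
        congr 1
        refine multinomial_subset (Finset.subset_univ I) k ?_
        intro i _ hiI
        by_contra h0
        apply hiI
        rw [← this, Finset.mem_filter]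
        exact ⟨Finset.mem_univ i, h0⟩
      calc (∑ k ∈ T.filter (fun k => univ.filter (fun i => k i ≠ 0) = I),
            (Nat.multinomial (univ : Finset (Fin m)) k : ℝ))
          = ∑ k ∈ T.filter (fun k => univ.filter (fun i => k i ≠ 0) = I),
            (Nat.multinomial I k : ℝ) := Finset.sum_congr rfl hcongr
        _ ≤ ∑ k ∈ piAntidiag I q, (Nat.multinomial I k : ℝ) :=
            Finset.sum_le_sum_of_subset_of_nonneg hsub
              (fun k _ _ => Nat.cast_nonneg _)
        _ = (I.card : ℝ) ^ q := by
            have hid := Finset.sum_pow_eq_sum_piAntidiag I (fun _ => (1 : ℝ)) q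
            simp only [Finset.sum_const, nsmul_eq_mul, mul_one, one_pow,
              Finset.prod_const_one] at hid
            exact hid.symm
        _ ≤ ((q : ℝ) / 2) ^ q := by
            refine pow_le_pow_left₀ (Nat.cast_nonneg _) ?_ _
            rw [le_div_iff₀ (by norm_num : (0:ℝ) < 2)]
            exact_mod_cast by omega
  have houter : ∑ I ∈ (univ : Finset (Fin m)).powerset,
      ∑ k ∈ T.filter (fun k => univ.filter (fun i => k i ≠ 0) = I),
        (Nat.multinomial (univ : Finset (Fin m)) k : ℝ) * (lam ^ q * ∏ i ∈ I, c i)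
      ≤ ((q : ℝ) / 2) ^ q * lam ^ q * Real.exp 2 := by
    have h1 : ∀ I ∈ (univ : Finset (Fin m)).powerset,
        (∑ k ∈ T.filter (fun k => univ.filter (fun i => k i ≠ 0) = I),
          (Nat.multinomial (univ : Finset (Fin m)) k : ℝ) * (lam ^ q * ∏ i ∈ I, c i))
        ≤ ((q : ℝ) / 2) ^ q * (lam ^ q * ∏ i ∈ I, c i) := by
      intro I hI
      rw [← Finset.sum_mul]
      refine mul_le_mul_of_nonneg_right (hfib I hI) ?_
      have := Finset.prod_nonneg (fun i (_ : i ∈ I) => hc0 i)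
      positivity
    calc ∑ I ∈ (univ : Finset (Fin m)).powerset,
        ∑ k ∈ T.filter (fun k => univ.filter (fun i => k i ≠ 0) = I),
          (Nat.multinomial (univ : Finset (Fin m)) k : ℝ) * (lam ^ q * ∏ i ∈ I, c i)
        ≤ ∑ I ∈ (univ : Finset (Fin m)).powerset,
            ((q : ℝ) / 2) ^ q * (lam ^ q * ∏ i ∈ I, c i) := Finset.sum_le_sum h1
      _ = ((q : ℝ) / 2) ^ q * lam ^ q *
            ∑ I ∈ (univ : Finset (Fin m)).powerset, ∏ i ∈ I, c i := by
          rw [Finset.mul_sum]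
          refine Finset.sum_congr rfl fun I _ => ?_
          ring
      _ ≤ ((q : ℝ) / 2) ^ q * lam ^ q * Real.exp 2 := by
          refine mul_le_mul_of_nonneg_left ?_ (by positivity)
          have hps : ∑ I ∈ (univ : Finset (Fin m)).powerset, ∏ i ∈ I, c i
              = ∏ i, (c i + 1) := by
            rw [Finset.prod_add]
            refine Finset.sum_congr rfl fun I _ => ?_
            simp
          rw [hps]
          calc ∏ i, (c i + 1) ≤ ∏ i, Real.exp (c i) :=
                Finset.prod_le_prod (fun i _ => by have := hc0 i; positivity)
                  (fun i _ => by have := Real.add_one_le_exp (c i); linarith)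
            _ = Real.exp (∑ i, c i) := (Real.exp_sum _ _).symm
            _ ≤ Real.exp 2 := Real.exp_le_exp.mpr hcsum
  have hfinal : ((q : ℝ) / 2) ^ q * lam ^ q * Real.exp 2 ≤ (2 * q : ℝ) ^ q * lam ^ q := by
    have he2 : Real.exp 2 ≤ 16 := by
      have h := Real.exp_one_lt_d9
      have hp := Real.exp_pos 1
      calc Real.exp 2 = Real.exp 1 * Real.exp 1 := by
            rw [← Real.exp_add]; norm_num
        _ ≤ 16 := by nlinarith
    have h4 : (16 : ℝ) ≤ 4 ^ q :=
      calc (16 : ℝ) = 4 ^ 2 := by norm_num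
        _ ≤ 4 ^ q := pow_le_pow_right₀ (by norm_num) hq2
    calc ((q : ℝ) / 2) ^ q * lam ^ q * Real.exp 2
        ≤ ((q : ℝ) / 2) ^ q * lam ^ q * (4 : ℝ) ^ q := by
          refine mul_le_mul_of_nonneg_left (he2.trans h4) (by positivity)
      _ = (2 * q : ℝ) ^ q * lam ^ q := by
          rw [mul_right_comm, ← mul_pow]
          congr 2
          ring
  calc ∑ k ∈ piAntidiag (univ : Finset (Fin m)) q, F k
      = ∑ k ∈ T, F k := hfil
    _ ≤ ∑ k ∈ T, (Nat.multinomial (univ : Finset (Fin m)) k : ℝ) *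
        (lam ^ q * ∏ i ∈ univ.filter (fun i => k i ≠ 0), c i) := hstep
    _ = _ := hgroup
    _ ≤ ((q : ℝ) / 2) ^ q * lam ^ q * Real.exp 2 := houter
    _ ≤ (2 * q : ℝ) ^ q * lam ^ q := hfinal


lemma integral_sub_mean_sq {f : Ω → ℝ} (hf : Integrable f μ)
    (hf2 : Integrable (fun ω => f ω ^ 2) μ) :
    (∫ ω, (f ω - ∫ x, f x ∂μ) ^ 2 ∂μ) = (∫ ω, f ω ^ 2 ∂μ) - (∫ ω, f ω ∂μ) ^ 2 := by
  set c := ∫ x, f x ∂μ with hc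
  have h : (fun ω => (f ω - c) ^ 2) = fun ω => f ω ^ 2 - 2 * c * f ω + c ^ 2 := by
    ext ω; ring
  have h2 : Integrable (fun ω => 2 * c * f ω) μ := hf.const_mul (2 * c)
  have h12 : Integrable (fun ω => f ω ^ 2 - 2 * c * f ω) μ := hf2.sub h2
  rw [h, integral_add h12 (integrable_const _),
    integral_sub hf2 h2, integral_const_mul, integral_const]
  simp only [measure_univ, probReal_univ, ENNReal.toReal_one, smul_eq_mul, one_mul, ← hc]
  ring

end RosenthalAux

/-- Rosenthal-type concentration inequality for weighted sums of powers of independent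
random variables with all moments bounded by `A^r r^r`. -/
theorem rosenthal_concentration
    {Ω : Type*} [MeasurableSpace Ω] (μ : Measure Ω) [IsProbabilityMeasure μ]
    (m : ℕ) (hm : 3 ≤ m)
    (ε : Fin m → Ω → ℝ) (hmeas : ∀ i, Measurable (ε i))
    (hind : iIndepFun ε μ)
    (A : ℝ) (hA : 0 < A)
    (hint : ∀ i, ∀ r : ℕ, 2 ≤ r → Integrable (fun ω => |ε i ω| ^ r) μ)
    (hmom : ∀ i, ∀ r : ℕ, 2 ≤ r → (∫ ω, |ε i ω| ^ r ∂μ) ≤ A ^ r * (r : ℝ) ^ r)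
    (w : Fin m → ℝ) (hw : ∀ i, 0 < w i)
    (p : ℕ) (hp : 1 ≤ p) (t : ℝ) (ht : 0 < t) :
    μ {ω | 2 * Real.exp 1 * (2 * A * p) ^ p *
          max (Real.sqrt (∑ i, (w i) ^ 2)) ((⨆ i, w i) * t ^ p) * t ≤
        ∑ i, w i * ((ε i ω) ^ p - ∫ ω', (ε i ω') ^ p ∂μ)} ≤
      ENNReal.ofReal ((m : ℝ) * Real.exp (2 - t)) := by
  classical
  -- trivial case t ≤ 2
  by_cases htriv : t ≤ 2
  · have h1 : (1 : ℝ) ≤ (m : ℝ) * Real.exp (2 - t) := by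
      have hexp : (1 : ℝ) ≤ Real.exp (2 - t) := by
        rw [show (1:ℝ) = Real.exp 0 from (Real.exp_zero).symm]
        exact Real.exp_le_exp.mpr (by linarith)
      have hm3 : (3 : ℝ) ≤ (m : ℝ) := by exact_mod_cast hm
      calc (1:ℝ) ≤ (m:ℝ) * 1 := by linarith
        _ ≤ (m:ℝ) * Real.exp (2 - t) :=
            mul_le_mul_of_nonneg_left hexp (by linarith)
    calc μ _ ≤ 1 := prob_le_one
      _ = ENNReal.ofReal 1 := ENNReal.ofReal_one.symm
      _ ≤ ENNReal.ofReal ((m : ℝ) * Real.exp (2 - t)) := ENNReal.ofReal_le_ofReal h1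
  push_neg at htriv
  -- choose even q
  set q : ℕ := 2 * Nat.floor (t / 2) with hq_def
  have hfl1 : 1 ≤ Nat.floor (t / 2) := Nat.le_floor (by linarith)
  have hq2 : 2 ≤ q := by omega
  have hqe : Even q := even_two_mul _
  have hqt : (q : ℝ) ≤ t := by
    have := Nat.floor_le (by positivity : (0:ℝ) ≤ t / 2)
    rw [hq_def]
    push_cast
    linarith
  have htq : t ≤ (q : ℝ) + 2 := by
    have := Nat.lt_floor_add_one (t / 2)
    rw [hq_def]
    push_cast
    linarith
  have hq0 : (0 : ℝ) < q := by positivity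
  -- abbreviations
  have hm0 : 0 < m := by omega
  have : Nonempty (Fin m) := ⟨⟨0, hm0⟩⟩
  set c : Fin m → ℝ := fun i => ∫ ω', ε i ω' ^ p ∂μ with hc_def
  set ξ : Fin m → Ω → ℝ := fun i ω => w i * (ε i ω ^ p - c i) with hξ_def
  set W2 : ℝ := Real.sqrt (∑ i, w i ^ 2) with hW2_def
  set Wi : ℝ := ⨆ i, w i with hWi_def
  set K : ℝ := max W2 (Wi * t ^ p) with hK_def
  set M : ℝ := 2 * Real.exp 1 * (2 * A * p) ^ p * K * t with hM_def

  have hp0 : (0:ℝ) < (p:ℝ) := by exact_mod_cast (by omega : 0 < p)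
  have hw_le_Wi : ∀ i, w i ≤ Wi := fun i =>
    le_ciSup (Set.Finite.bddAbove (Set.finite_range w)) i
  have hWi_pos : 0 < Wi := lt_of_lt_of_le (hw ⟨0, hm0⟩) (hw_le_Wi ⟨0, hm0⟩)
  have hsum_sq_pos : 0 < ∑ i, w i ^ 2 :=
    Finset.sum_pos (fun i _ => pow_pos (hw i) 2) ⟨⟨0, hm0⟩, Finset.mem_univ _⟩
  have hW2_pos : 0 < W2 := Real.sqrt_pos.mpr hsum_sq_pos
  have hK_pos : 0 < K := lt_of_lt_of_le hW2_pos (le_max_left _ _)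
  have hB_pos : (0:ℝ) < 2 * A * (p:ℝ) := by positivity
  have hM_pos : 0 < M := by
    rw [hM_def]
    have h1 := Real.exp_pos 1
    have h2 := pow_pos hB_pos p
    positivity
  -- integrability of |ε|^k for every k
  have habs : ∀ i (k : ℕ), Integrable (fun ω => |ε i ω| ^ k) μ := by
    intro i k
    rcases Nat.lt_or_ge k 2 with hk | hk
    · interval_cases k
      · simpa using integrable_const (1:ℝ)
      · have hg : Integrable (fun ω => 1 + |ε i ω| ^ 2) μ := by
          exact (integrable_const (1:ℝ)).add (hint i 2 le_rfl)
        refine Integrable.mono' hg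
          (((hmeas i).abs.pow_const 1).aestronglyMeasurable) (ae_of_all _ fun ω => ?_)
        rw [Real.norm_eq_abs, pow_one, abs_abs]
        have h := sq_nonneg (|ε i ω| - 1)
        have h2 : (|ε i ω| - 1) ^ 2 = |ε i ω| ^ 2 - 2 * |ε i ω| + 1 := by ring
        linarith only [h, h2, sq_nonneg (|ε i ω|)]
    · exact hint i k hk
  have hIpow : ∀ i (k : ℕ), Integrable (fun ω => ε i ω ^ k) μ := by
    intro i k
    refine (habs i k).mono' (((hmeas i).pow_const k).aestronglyMeasurable)
      (ae_of_all _ fun ω => ?_)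
    rw [Real.norm_eq_abs, abs_pow]
  -- bound on |c i|
  set D : ℝ := A ^ p * (2 * (p:ℝ)) ^ p with hD_def
  have hD_pos : 0 < D := by rw [hD_def]; positivity
  have hD_sq : D ^ 2 = A ^ (2*p) * (2 * (p:ℝ)) ^ (2*p) := by
    rw [hD_def, mul_pow, ← pow_mul', ← pow_mul']
  have hmom2p : ∀ i, (∫ ω, |ε i ω| ^ (2*p) ∂μ) ≤ D ^ 2 := by
    intro i
    have h := hmom i (2*p) (by omega)
    rw [hD_sq]
    calc (∫ ω, |ε i ω| ^ (2*p) ∂μ) ≤ A ^ (2*p) * ((2*p : ℕ) : ℝ) ^ (2*p) := h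
      _ = A ^ (2*p) * (2 * (p:ℝ)) ^ (2*p) := by push_cast; ring
  have hIf2 : ∀ i, Integrable (fun ω => (ε i ω ^ p) ^ 2) μ := by
    intro i
    have := hIpow i (p*2)
    simpa [pow_mul] using this
  have hpow2_eq : ∀ i, (fun ω => (ε i ω ^ p) ^ 2) = fun ω => |ε i ω| ^ (2*p) := by
    intro i
    ext ω
    rw [(even_two_mul p).pow_abs, mul_comm, pow_mul]
  have hc_sq : ∀ i, (c i) ^ 2 ≤ D ^ 2 := by
    intro i
    have heq := integral_sub_mean_sq (μ := μ) (f := fun ω => ε i ω ^ p)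
      (hIpow i p) (hIf2 i)
    have hnn : 0 ≤ ∫ ω, (ε i ω ^ p - ∫ x, ε i x ^ p ∂μ) ^ 2 ∂μ :=
      integral_nonneg fun ω => sq_nonneg _
    have h2 : (∫ ω, (ε i ω ^ p) ^ 2 ∂μ) ≤ D ^ 2 := by
      rw [hpow2_eq i]
      exact hmom2p i
    have hc_eq : c i = ∫ x, ε i x ^ p ∂μ := rfl
    rw [hc_eq]
    linarith [heq]
  have hcD : ∀ i, |c i| ≤ D := by
    intro i
    refine (pow_le_pow_iff_left₀ (abs_nonneg _) hD_pos.le two_ne_zero).mp ?_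
    rw [sq_abs]
    exact hc_sq i
  -- ξ facts
  have hmeasξ : ∀ i, Measurable (ξ i) := fun i =>
    (((hmeas i).pow_const p).sub measurable_const).const_mul (w i)
  have hindξ : iIndepFun ξ μ := by
    have h := hind.comp (fun i x => w i * (x ^ p - c i))
      (fun i => ((measurable_id.pow_const p).sub measurable_const).const_mul (w i))
    exact h
  have habs_sub : ∀ (x y : ℝ), |x - y| ≤ |x| + |y| := fun x y => by
    calc |x - y| = |x + (-y)| := by rw [sub_eq_add_neg]
      _ ≤ |x| + |(-y)| := abs_add_le _ _
      _ = |x| + |y| := by rw [abs_neg]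
  have hξ_bound : ∀ i (k : ℕ) ω,
      |ξ i ω| ^ k ≤ w i ^ k * (2 ^ (k-1) * (|ε i ω| ^ (p*k) + |c i| ^ k)) := by
    intro i k ω
    have h1 : |ξ i ω| = w i * |ε i ω ^ p - c i| := by
      rw [hξ_def, abs_mul, abs_of_pos (hw i)]
    rw [h1, mul_pow]
    refine mul_le_mul_of_nonneg_left ?_ (pow_nonneg (hw i).le k)
    calc |ε i ω ^ p - c i| ^ k ≤ (|ε i ω ^ p| + |c i|) ^ k :=
          pow_le_pow_left₀ (abs_nonneg _) (habs_sub _ _) _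
      _ ≤ 2 ^ (k-1) * (|ε i ω ^ p| ^ k + |c i| ^ k) :=
          add_pow_le (abs_nonneg _) (abs_nonneg _) k
      _ = 2 ^ (k-1) * (|ε i ω| ^ (p*k) + |c i| ^ k) := by rw [abs_pow, ← pow_mul]
  have hdom : ∀ i (k : ℕ),
      Integrable (fun ω => w i ^ k * (2 ^ (k-1) * (|ε i ω| ^ (p*k) + |c i| ^ k))) μ := by
    intro i k
    exact (((habs i (p*k)).add (integrable_const _)).const_mul _).const_mul _
  have hintξ : ∀ i, ∀ k, k ≤ q → Integrable (fun ω => ξ i ω ^ k) μ := by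
    intro i k _
    refine Integrable.mono' (hdom i k)
      (((hmeasξ i).pow_const k).aestronglyMeasurable) (ae_of_all _ fun ω => ?_)
    rw [Real.norm_eq_abs, abs_pow]
    exact hξ_bound i k ω
  have hcentξ : ∀ i, (∫ ω, ξ i ω ∂μ) = 0 := by
    intro i
    have hceq : (∫ ω, ε i ω ^ p ∂μ) = c i := rfl
    calc (∫ ω, ξ i ω ∂μ) = ∫ ω, w i * (ε i ω ^ p - c i) ∂μ := rfl
      _ = w i * ∫ ω, (ε i ω ^ p - c i) ∂μ := integral_const_mul _ _
      _ = w i * ((∫ ω, ε i ω ^ p ∂μ) - c i) := by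
          rw [integral_sub (hIpow i p) (integrable_const _), integral_const]
          simp [measure_univ]
      _ = 0 := by rw [hceq, sub_self, mul_zero]
  -- second moments
  have hb_i : ∀ i, (∫ ω, ξ i ω ^ 2 ∂μ) ≤ w i ^ 2 * D ^ 2 := by
    intro i
    have hsq : (fun ω => ξ i ω ^ 2) = fun ω => w i ^ 2 * (ε i ω ^ p - c i) ^ 2 := by
      ext ω; rw [hξ_def]; ring
    rw [hsq, integral_const_mul]
    refine mul_le_mul_of_nonneg_left ?_ (by positivity)
    have heq := integral_sub_mean_sq (μ := μ) (f := fun ω => ε i ω ^ p)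
      (hIpow i p) (hIf2 i)
    have hc_eq : c i = ∫ x, ε i x ^ p ∂μ := rfl
    have h2 : (∫ ω, (ε i ω ^ p) ^ 2 ∂μ) ≤ D ^ 2 := by
      rw [hpow2_eq i]; exact hmom2p i
    rw [hc_eq, heq]
    linarith only [h2, sq_nonneg (∫ x, ε i x ^ p ∂μ)]
  -- q-th moments
  set X : ℝ := A ^ (p*q) * ((p:ℝ) * (q:ℝ)) ^ (p*q) with hX_def
  have hX_pos : 0 < X := by
    rw [hX_def]
    have : (0:ℝ) < (p:ℝ) * (q:ℝ) := by positivity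
    positivity
  have ha_i : ∀ i, (∫ ω, ξ i ω ^ q ∂μ) ≤ w i ^ q * (2 ^ q * X) := by
    intro i
    have h1 : (∫ ω, ξ i ω ^ q ∂μ) = ∫ ω, |ξ i ω| ^ q ∂μ := by
      rw [show (fun ω => ξ i ω ^ q) = fun ω => |ξ i ω| ^ q from
        funext fun ω => (hqe.pow_abs _).symm]
    have hmompq : (∫ ω, |ε i ω| ^ (p*q) ∂μ) ≤ X := by
      have h := hmom i (p*q) (le_trans hq2 (Nat.le_mul_of_pos_left q (by omega)))
      rw [hX_def]
      calc (∫ ω, |ε i ω| ^ (p*q) ∂μ) ≤ A ^ (p*q) * ((p*q : ℕ) : ℝ) ^ (p*q) := h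
        _ = A ^ (p*q) * ((p:ℝ) * (q:ℝ)) ^ (p*q) := by push_cast; ring
    have hcq : |c i| ^ q ≤ X := by
      calc |c i| ^ q ≤ D ^ q := pow_le_pow_left₀ (abs_nonneg _) (hcD i) q
        _ = A ^ (p*q) * (2 * (p:ℝ)) ^ (p*q) := by
            rw [hD_def, mul_pow, ← pow_mul, ← pow_mul]
        _ ≤ A ^ (p*q) * ((p:ℝ) * (q:ℝ)) ^ (p*q) := by
            refine mul_le_mul_of_nonneg_left ?_ (by positivity)
            refine pow_le_pow_left₀ (by positivity) ?_ _
            have h2q : (2:ℝ) ≤ (q:ℝ) := by exact_mod_cast hq2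
            calc 2 * (p:ℝ) = (p:ℝ) * 2 := by ring
              _ ≤ (p:ℝ) * (q:ℝ) := mul_le_mul_of_nonneg_left h2q hp0.le
        _ = X := hX_def.symm
    have hintabsq : Integrable (fun ω => |ξ i ω| ^ q) μ := by
      simpa [abs_pow] using (hintξ i q le_rfl).abs
    rw [h1]
    calc (∫ ω, |ξ i ω| ^ q ∂μ)
        ≤ ∫ ω, w i ^ q * (2 ^ (q-1) * (|ε i ω| ^ (p*q) + |c i| ^ q)) ∂μ :=
          integral_mono hintabsq (hdom i q) (fun ω => hξ_bound i q ω)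
      _ = w i ^ q * (2 ^ (q-1) * ((∫ ω, |ε i ω| ^ (p*q) ∂μ) + |c i| ^ q)) := by
          rw [integral_const_mul, integral_const_mul,
            integral_add (habs i (p*q)) (integrable_const _), integral_const]
          simp [measure_univ]
      _ ≤ w i ^ q * (2 ^ (q-1) * (X + X)) := by
          refine mul_le_mul_of_nonneg_left ?_ (pow_nonneg (hw i).le q)
          refine mul_le_mul_of_nonneg_left ?_ (by positivity)
          exact add_le_add hmompq hcq
      _ = w i ^ q * (2 ^ q * X) := by
          rw [show (2:ℝ) ^ (q-1) * (X + X) = 2 ^ (q-1) * 2 * X by ring, ← pow_succ,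
            show q - 1 + 1 = q by omega]
  -- lambda
  set Mq : ℝ := (m:ℝ) ^ ((q:ℝ)⁻¹) with hMq_def
  have hm_pos' : (0:ℝ) < m := by exact_mod_cast hm0
  have hMq_pos : 0 < Mq := Real.rpow_pos_of_pos hm_pos' _
  have hMq_pow : Mq ^ q = (m:ℝ) := by
    rw [hMq_def]
    exact Real.rpow_inv_natCast_pow (Nat.cast_nonneg m) (by omega)
  set l1 : ℝ := 2 * A ^ p * ((p:ℝ) * (q:ℝ)) ^ p * Wi with hl1_def
  have hl1_pos : 0 < l1 := by
    rw [hl1_def]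
    have : (0:ℝ) < (p:ℝ) * (q:ℝ) := by positivity
    positivity
  set L1 : ℝ := l1 * Mq with hL1_def
  set L2 : ℝ := D * W2 with hL2_def
  have hL1_pos : 0 < L1 := mul_pos hl1_pos hMq_pos
  have hL2_pos : 0 < L2 := mul_pos hD_pos hW2_pos
  set lam : ℝ := max L1 L2 with hlam_def
  have hlam_pos : 0 < lam := lt_of_lt_of_le hL1_pos (le_max_left _ _)
  -- sum bounds
  have hl1q : l1 ^ q = 2 ^ q * (A ^ p) ^ q * (((p:ℝ) * (q:ℝ)) ^ p) ^ q * Wi ^ q := by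
    rw [hl1_def]; ring
  have hsa : ∑ i, (∫ ω, ξ i ω ^ q ∂μ) ≤ lam ^ q := by
    have hsum : ∑ i, (∫ ω, ξ i ω ^ q ∂μ) ≤ ∑ i : Fin m, w i ^ q * (2 ^ q * X) :=
      Finset.sum_le_sum fun i _ => ha_i i
    have hsum2 : ∑ i : Fin m, w i ^ q * (2 ^ q * X) ≤ (m:ℝ) * Wi ^ q * (2 ^ q * X) := by
      rw [← Finset.sum_mul]
      refine mul_le_mul_of_nonneg_right ?_ (by positivity)
      calc ∑ i : Fin m, w i ^ q ≤ ∑ i : Fin m, Wi ^ q :=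
            Finset.sum_le_sum fun i _ => pow_le_pow_left₀ (hw i).le (hw_le_Wi i) q
        _ = (m:ℝ) * Wi ^ q := by
            rw [Finset.sum_const, Finset.card_univ, Fintype.card_fin, nsmul_eq_mul]
    have hL1q_eq : L1 ^ q = l1 ^ q * (m:ℝ) := by
      rw [hL1_def, mul_pow, hMq_pow]
    have hval : (m:ℝ) * Wi ^ q * (2 ^ q * X) ≤ L1 ^ q := by
      rw [hL1q_eq, hl1q, hX_def, ← pow_mul, ← pow_mul]
      apply le_of_eq
      ring
    have hlam_ge : L1 ^ q ≤ lam ^ q :=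
      pow_le_pow_left₀ hL1_pos.le (le_max_left _ _) q
    linarith
  have hsb : ∑ i, (∫ ω, ξ i ω ^ 2 ∂μ) ≤ lam ^ 2 := by
    have hsum : ∑ i, (∫ ω, ξ i ω ^ 2 ∂μ) ≤ ∑ i : Fin m, w i ^ 2 * D ^ 2 :=
      Finset.sum_le_sum fun i _ => hb_i i
    have hW2sq : W2 ^ 2 = ∑ i, w i ^ 2 := Real.sq_sqrt hsum_sq_pos.le
    have hL2sq : L2 ^ 2 = D ^ 2 * W2 ^ 2 := by rw [hL2_def]; ring
    have hsum2 : ∑ i : Fin m, w i ^ 2 * D ^ 2 = L2 ^ 2 := by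
      rw [← Finset.sum_mul, hL2sq, hW2sq]
      ring
    have hlam_ge : L2 ^ 2 ≤ lam ^ 2 :=
      pow_le_pow_left₀ hL2_pos.le (le_max_right _ _) 2
    linarith
  -- apply the core lemma
  obtain ⟨hIq, hval⟩ := rosenthal_core ξ hmeasξ hindξ q hq2 hqe hintξ hcentξ lam hlam_pos hsa hsb
  -- arithmetic
  have hq_exp : Real.exp (-(q:ℝ)) ≤ Real.exp (2 - t) :=
    Real.exp_le_exp.mpr (by linarith)
  have hMe : M * Real.exp (-1) = 2 * (2 * A * (p:ℝ)) ^ p * K * t := by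
    rw [hM_def, Real.exp_neg]
    have := Real.exp_ne_zero 1
    field_simp
  have hpow_key : ∀ L : ℝ, 0 ≤ L → 2 * (q:ℝ) * L ≤ M * Real.exp (-1) →
      (2 * (q:ℝ)) ^ q * L ^ q ≤ M ^ q * Real.exp (2 - t) := by
    intro L hL hML
    have h2 : (2 * (q:ℝ) * L) ^ q ≤ (M * Real.exp (-1)) ^ q :=
      pow_le_pow_left₀ (by positivity) hML q
    have h3 : (M * Real.exp (-1)) ^ q = M ^ q * Real.exp (-(q:ℝ)) := by
      rw [mul_pow, ← Real.exp_nat_mul]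
      congr 1
      ring
    calc (2 * (q:ℝ)) ^ q * L ^ q = (2 * (q:ℝ) * L) ^ q := (mul_pow _ _ _).symm
      _ ≤ M ^ q * Real.exp (-(q:ℝ)) := h2.trans_eq h3
      _ ≤ M ^ q * Real.exp (2 - t) :=
          mul_le_mul_of_nonneg_left hq_exp (by positivity)
  have h2p : (2:ℝ) ≤ 2 ^ p := by
    calc (2:ℝ) = 2 ^ 1 := (pow_one 2).symm
      _ ≤ 2 ^ p := pow_le_pow_right₀ one_le_two hp
  have hB_expand : (2 * A * (p:ℝ)) ^ p = 2 ^ p * A ^ p * (p:ℝ) ^ p := by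
    rw [mul_pow, mul_pow]
  have hcase1 : 2 * (q:ℝ) * l1 ≤ M * Real.exp (-1) := by
    rw [hMe, hB_expand, hl1_def, mul_pow]
    calc 2 * (q:ℝ) * (2 * A ^ p * ((p:ℝ) ^ p * (q:ℝ) ^ p) * Wi)
        = 4 * (q:ℝ) * (q:ℝ) ^ p * (A ^ p * (p:ℝ) ^ p * Wi) := by ring
      _ ≤ 2 * 2 ^ p * t * t ^ p * (A ^ p * (p:ℝ) ^ p * Wi) := by
          refine mul_le_mul_of_nonneg_right ?_ (by positivity)
          have hqp : (q:ℝ) ^ p ≤ t ^ p := pow_le_pow_left₀ hq0.le hqt p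
          have h4t : 4 * (q:ℝ) ≤ 2 * 2 ^ p * t := by
            have h1 : 2 * t ≤ 2 ^ p * t := mul_le_mul_of_nonneg_right h2p ht.le
            linarith only [hqt, h1, ht, h2p]
          calc 4 * (q:ℝ) * (q:ℝ) ^ p ≤ 4 * (q:ℝ) * t ^ p :=
                mul_le_mul_of_nonneg_left hqp (by positivity)
            _ ≤ 2 * 2 ^ p * t * t ^ p :=
                mul_le_mul_of_nonneg_right h4t (by positivity)
      _ = 2 * (2 ^ p * A ^ p * (p:ℝ) ^ p) * (Wi * t ^ p) * t := by ring
      _ ≤ 2 * (2 ^ p * A ^ p * (p:ℝ) ^ p) * K * t := by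
          refine mul_le_mul_of_nonneg_right
            (mul_le_mul_of_nonneg_left (le_max_right _ _) (by positivity)) ht.le
  have hcase2 : 2 * (q:ℝ) * L2 ≤ M * Real.exp (-1) := by
    rw [hMe, hB_expand, hL2_def, hD_def, mul_pow]
    calc 2 * (q:ℝ) * (A ^ p * (2 ^ p * (p:ℝ) ^ p) * W2)
        = (q:ℝ) * (2 * 2 ^ p * A ^ p * (p:ℝ) ^ p * W2) := by ring
      _ ≤ t * (2 * 2 ^ p * A ^ p * (p:ℝ) ^ p * W2) :=
          mul_le_mul_of_nonneg_right hqt (by positivity)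
      _ = 2 * (2 ^ p * A ^ p * (p:ℝ) ^ p) * W2 * t := by ring
      _ ≤ 2 * (2 ^ p * A ^ p * (p:ℝ) ^ p) * K * t := by
          refine mul_le_mul_of_nonneg_right
            (mul_le_mul_of_nonneg_left (le_max_left _ _) (by positivity)) ht.le
  have hkey : (2 * (q:ℝ)) ^ q * lam ^ q ≤ M ^ q * ((m:ℝ) * Real.exp (2 - t)) := by
    rcases max_cases L1 L2 with ⟨heq, _⟩ | ⟨heq, _⟩
    · rw [hlam_def, heq]
      have hL1split : L1 ^ q = l1 ^ q * (m:ℝ) := by rw [hL1_def, mul_pow, hMq_pow]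
      calc (2 * (q:ℝ)) ^ q * L1 ^ q
          = (2 * (q:ℝ)) ^ q * l1 ^ q * (m:ℝ) := by rw [hL1split]; ring
        _ ≤ M ^ q * Real.exp (2 - t) * (m:ℝ) := by
            refine mul_le_mul_of_nonneg_right
              (hpow_key l1 hl1_pos.le hcase1) (Nat.cast_nonneg m)
        _ = M ^ q * ((m:ℝ) * Real.exp (2 - t)) := by ring
    · rw [hlam_def, heq]
      have h := hpow_key L2 hL2_pos.le hcase2
      have h1m : (1:ℝ) ≤ (m:ℝ) := by exact_mod_cast (by omega : 1 ≤ m)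
      calc (2 * (q:ℝ)) ^ q * L2 ^ q ≤ M ^ q * Real.exp (2 - t) := h
        _ ≤ M ^ q * ((m:ℝ) * Real.exp (2 - t)) := by
            refine mul_le_mul_of_nonneg_left ?_ (pow_nonneg hM_pos.le q)
            exact le_mul_of_one_le_left (Real.exp_pos _).le h1m
  -- Markov and conclusion
  have hS_nonneg : (0 : Ω → ℝ) ≤ᵐ[μ] fun ω => (∑ i, ξ i ω) ^ q :=
    ae_of_all _ fun ω => hqe.pow_nonneg _
  have hmarkov := mul_meas_ge_le_integral_of_nonneg hS_nonneg hIq (M ^ q)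
  have htoReal : (μ {ω | M ^ q ≤ (∑ i, ξ i ω) ^ q}).toReal ≤ (m:ℝ) * Real.exp (2 - t) := by
    have hMq_pos' : (0:ℝ) < M ^ q := pow_pos hM_pos q
    have hchain : M ^ q * (μ {ω | M ^ q ≤ (∑ i, ξ i ω) ^ q}).toReal
        ≤ M ^ q * ((m:ℝ) * Real.exp (2 - t)) := by
      calc M ^ q * (μ {ω | M ^ q ≤ (∑ i, ξ i ω) ^ q}).toReal
          ≤ ∫ ω, (∑ i, ξ i ω) ^ q ∂μ := hmarkov
        _ ≤ (2 * (q:ℝ)) ^ q * lam ^ q := by exact_mod_cast hval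
        _ ≤ M ^ q * ((m:ℝ) * Real.exp (2 - t)) := hkey
    exact le_of_mul_le_mul_left hchain hMq_pos'
  show μ {ω | M ≤ ∑ i, ξ i ω} ≤ ENNReal.ofReal ((m : ℝ) * Real.exp (2 - t))
  calc μ {ω | M ≤ ∑ i, ξ i ω}
      ≤ μ {ω | M ^ q ≤ (∑ i, ξ i ω) ^ q} :=
        measure_mono (fun ω h => pow_le_pow_left₀ hM_pos.le h q)
    _ = ENNReal.ofReal ((μ {ω | M ^ q ≤ (∑ i, ξ i ω) ^ q}).toReal) :=
        (ENNReal.ofReal_toReal (measure_ne_top μ _)).symm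
    _ ≤ ENNReal.ofReal ((m:ℝ) * Real.exp (2 - t)) := ENNReal.ofReal_le_ofReal htoReal
end
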